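/- arXiv:2206.01671 — 12 statements merged into one kernel-verified Lean document; each statement's English description precedes it below -/
import Mathlib

section
/- Every first-countable T1 topological space that has a σ-discrete closed network is symmetrizable. -/
open Set Filter Topology

/-- A symmetric on `X`: nonnegative, vanishing exactly on the diagonal, symmetric. -/
def SymmetricDist {X : Type*} (d : X → X → ℝ) : Prop :=
  (∀ x y, 0 ≤ d x y) ∧ (∀ x y, d x y = 0 ↔ x = y) ∧ (∀ x y, d x y = d y x)

/-- The topology of `X` is generated by the premetric `d`: a set is open iff
every point of it contains some `d`-ball around the point. -/
def GeneratesTopology {X : Type*} [TopologicalSpace X] (d : X → X → ℝ) : Prop :=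
  ∀ U : Set X, IsOpen U ↔ ∀ x ∈ U, ∃ ε > 0, {y : X | d x y < ε} ⊆ U

/-- A topological space is symmetrizable if its topology is generated by some symmetric. -/
def Symmetrizable (X : Type*) [TopologicalSpace X] : Prop :=
  ∃ d : X → X → ℝ, SymmetricDist d ∧ GeneratesTopology d

/-- A family `F` of subsets of `X` is a network: for every open `U` and `x ∈ U`
there is `A ∈ F` with `x ∈ A ⊆ U`. -/
def IsNetwork {X : Type*} [TopologicalSpace X] (F : Set (Set X)) : Prop :=
  ∀ U : Set X, IsOpen U → ∀ x ∈ U, ∃ A ∈ F, x ∈ A ∧ A ⊆ U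

/-- A family of subsets is discrete if every point has an (open) neighborhood
meeting at most one member of the family. -/
def IsDiscreteFamily {X : Type*} [TopologicalSpace X] (F : Set (Set X)) : Prop :=
  ∀ x : X, ∃ U : Set X, IsOpen U ∧ x ∈ U ∧
    {A ∈ F | (A ∩ U).Nonempty}.Subsingleton

/-- The union of a subfamily of a discrete family of closed sets is closed. -/
lemma discrete_closed_sUnion {X : Type*} [TopologicalSpace X] {F : Set (Set X)}
    (hd : IsDiscreteFamily F) (hc : ∀ A ∈ F, IsClosed A) {S : Set (Set X)} (hS : S ⊆ F) :
    IsClosed (⋃₀ S) := by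
  rw [← isOpen_compl_iff, isOpen_iff_forall_mem_open]
  intro z hz
  obtain ⟨U, hUo, hzU, hsub⟩ := hd z
  by_cases h : ∃ A ∈ S, (A ∩ U).Nonempty
  · obtain ⟨A, hAS, hA⟩ := h
    have hzA : z ∉ A := fun hzA => hz ⟨A, hAS, hzA⟩
    refine ⟨U \ A, ?_, hUo.sdiff (hc A (hS hAS)), ⟨hzU, hzA⟩⟩
    rintro y ⟨hyU, hyA⟩ ⟨A', hA'S, hyA'⟩
    have : A' = A := hsub ⟨hS hA'S, ⟨y, hyA', hyU⟩⟩ ⟨hS hAS, hA⟩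
    exact hyA (this ▸ hyA')
  · refine ⟨U, ?_, hUo, hzU⟩
    rintro y hyU ⟨A, hAS, hyA⟩
    exact h ⟨A, hAS, ⟨y, hyA, hyU⟩⟩

/-- Every first-countable T1 space with a σ-discrete closed network is symmetrizable. -/
theorem arhangelskii_symmetrizable {X : Type*} [TopologicalSpace X]
    [FirstCountableTopology X] [T1Space X]
    (F : ℕ → Set (Set X)) (hdisc : ∀ n, IsDiscreteFamily (F n))
    (hnet : IsNetwork (⋃ n, F n)) (hclosed : ∀ A ∈ ⋃ n, F n, IsClosed A) :
    Symmetrizable X := by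
  classical
  -- antitone neighborhood basis
  have hB : ∀ x : X, ∃ B : ℕ → Set X, (𝓝 x).HasAntitoneBasis B :=
    fun x => (𝓝 x).exists_antitone_basis
  choose B hBb using hB
  have hBmem : ∀ x n, B x n ∈ 𝓝 x := fun x n => (hBb x).mem n
  have hBanti : ∀ x, Antitone (B x) := fun x => (hBb x).antitone
  -- the key relation
  set R : X → X → ℕ → Prop := fun x y n =>
    y ∈ B x n ∧ ∀ m ≤ n, ∀ A ∈ F m, y ∈ A → x ∈ A with hRdef
  have hRanti : ∀ x y : X, ∀ {n n' : ℕ}, n' ≤ n → R x y n → R x y n' := by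
    intro x y n n' hle hr
    exact ⟨hBanti x hle hr.1, fun m hm A hA hyA => hr.2 m (hm.trans hle) A hA hyA⟩
  have hex : ∀ x y : X, x ≠ y → ∃ n, ¬ R x y n := by
    intro x y hxy
    obtain ⟨A, hAF, hyA, hAsub⟩ := hnet {x}ᶜ isOpen_compl_singleton y
      (by simpa using (Ne.symm hxy))
    obtain ⟨m, hAm⟩ := mem_iUnion.mp hAF
    exact ⟨m, fun hRm => hAsub (hRm.2 m le_rfl A hAm hyA) rfl⟩
  set n₀ : X → X → ℕ := fun x y => if h : ∃ n, ¬ R x y n then Nat.find h else 0 with hn₀def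
  -- if n < n₀ x y then R x y n
  have hn₀R : ∀ x y : X, ∀ n : ℕ, n < n₀ x y → R x y n := by
    intro x y n hn
    by_cases h : ∃ k, ¬ R x y k
    · rw [hn₀def] at hn
      simp only [dif_pos h] at hn
      exact not_not.mp (Nat.find_min h hn)
    · push_neg at h; exact h n
  -- if R x y n and x ≠ y then n < n₀ x y
  have hRn₀ : ∀ x y : X, x ≠ y → ∀ n : ℕ, R x y n → n < n₀ x y := by
    intro x y hxy n hr
    have h := hex x y hxy
    rw [hn₀def]; simp only [dif_pos h]
    rw [Nat.lt_find_iff]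
    intro m hm
    exact not_not.mpr (hRanti x y hm hr)
  set e : X → X → ℝ := fun x y => 1 / ((n₀ x y : ℝ) + 1) with hedef
  have hepos : ∀ x y, 0 < e x y := by
    intro x y; rw [hedef]; positivity
  set d : X → X → ℝ := fun x y => if x = y then 0 else min (e x y) (e y x) with hddef
  refine ⟨d, ⟨?_, ?_, ?_⟩, ?_⟩
  · -- nonneg
    intro x y
    simp only [hddef]
    split
    · exact le_refl 0
    · exact le_min (hepos x y).le (hepos y x).le
  · -- zero iff eq
    intro x y
    simp only [hddef]
    constructor
    · intro h
      by_contra hne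
      rw [if_neg hne] at h
      exact absurd h (ne_of_gt (lt_min (hepos x y) (hepos y x)))
    · intro h; rw [if_pos h]
  · -- symm
    intro x y
    simp only [hddef]
    by_cases h : x = y
    · rw [if_pos h, if_pos h.symm]
    · rw [if_neg h, if_neg (Ne.symm h), min_comm]
  · -- generates topology
    intro U
    constructor
    · -- open → balls
      intro hU x hx
      obtain ⟨A, hAF, hxA, hAU⟩ := hnet U hU x hx
      obtain ⟨m, hAm⟩ := mem_iUnion.mp hAF
      obtain ⟨k, -, hk⟩ := (hBb x).toHasBasis.mem_iff.mp (hU.mem_nhds hx)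
      set K := max m k with hK
      refine ⟨1 / ((K : ℝ) + 2), by positivity, ?_⟩
      intro y hy
      simp only [mem_setOf_eq] at hy
      by_cases hxy : x = y
      · exact hxy ▸ hx
      simp only [hddef, if_neg hxy] at hy
      rcases min_lt_iff.mp hy with hlt | hlt
      · -- e x y small : y ∈ B x K ⊆ B x k ⊆ U
        simp only [hedef] at hlt
        have h2 : (K : ℝ) + 2 < (n₀ x y : ℝ) + 1 :=
          lt_of_one_div_lt_one_div (by positivity) hlt
        have hKn : K < n₀ x y := by
          exact_mod_cast (show (K : ℝ) < (n₀ x y : ℝ) by linarith)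
        have hr := hn₀R x y K hKn
        exact hk (hBanti x (le_max_right m k) hr.1)
      · -- e y x small : use the network set A
        simp only [hedef] at hlt
        have h2 : (K : ℝ) + 2 < (n₀ y x : ℝ) + 1 :=
          lt_of_one_div_lt_one_div (by positivity) hlt
        have hKn : K < n₀ y x := by
          exact_mod_cast (show (K : ℝ) < (n₀ y x : ℝ) by linarith)
        have hr := hn₀R y x K hKn
        exact hAU (hr.2 m (le_max_left m k) A hAm hxA)
    · -- balls → open
      intro h
      rw [isOpen_iff_mem_nhds]
      intro x hx
      obtain ⟨ε, hε, hball⟩ := h x hx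
      obtain ⟨n, hn⟩ := exists_nat_gt (1 / ε)
      have hnε : 1 / ((n : ℝ) + 2) < ε := by
        rw [div_lt_iff₀ (by positivity)]
        have h1 : 1 / ε < (n : ℝ) + 2 := by linarith
        calc (1 : ℝ) = ε * (1 / ε) := by field_simp
        _ < ε * ((n : ℝ) + 2) := by
            exact mul_lt_mul_of_pos_left h1 hε
      -- the neighborhood W
      have hG : ∀ m : ℕ, (⋃₀ {A ∈ F m | x ∉ A})ᶜ ∈ 𝓝 x := by
        intro m
        have hcl : IsClosed (⋃₀ {A ∈ F m | x ∉ A}) :=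
          discrete_closed_sUnion (hdisc m) (fun A hA => hclosed A (mem_iUnion.mpr ⟨m, hA⟩))
            (fun A hA => hA.1)
        refine hcl.isOpen_compl.mem_nhds ?_
        rintro ⟨A, ⟨hAF, hxA⟩, hxA'⟩
        exact hxA hxA'
      have hW : B x n ∩ ⋂ m ∈ Finset.range (n + 1), (⋃₀ {A ∈ F m | x ∉ A})ᶜ ∈ 𝓝 x := by
        refine Filter.inter_mem (hBmem x n) ?_
        exact (Filter.biInter_finset_mem _).mpr (fun m _ => hG m)
      refine Filter.mem_of_superset hW ?_
      rintro y ⟨hyB, hyG⟩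
      by_cases hxy : x = y
      · exact hxy ▸ hx
      · apply hball
        simp only [mem_setOf_eq]
        have hr : R x y n := by
          refine ⟨hyB, ?_⟩
          intro m hm A hA hyA
          by_contra hxA
          have hyU : y ∈ ⋃₀ {A ∈ F m | x ∉ A} := ⟨A, ⟨hA, hxA⟩, hyA⟩
          have := Set.mem_iInter₂.mp hyG m (Finset.mem_range.mpr (Nat.lt_succ_of_le hm))
          exact this hyU
        have hlt : n < n₀ x y := hRn₀ x y hxy n hr
        have hle : e x y ≤ 1 / ((n : ℝ) + 2) := by
          simp only [hedef]
          apply one_div_le_one_div_of_le (by positivity)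
          have : (n : ℝ) + 1 ≤ (n₀ x y : ℝ) := by exact_mod_cast hlt
          linarith
        simp only [hddef, if_neg hxy]
        calc min (e x y) (e y x) ≤ e x y := min_le_left _ _
        _ ≤ 1 / ((n : ℝ) + 2) := hle
        _ < ε := hnε
end

section
/- Every first-countable T1 topological space that has a countable closed network is symmetrizable. -/
open Filter Set Topology


/-- Every first-countable T1 space with a countable closed network is symmetrizable. -/
theorem countable_closed_network_symmetrizable {X : Type*} [TopologicalSpace X]
    [FirstCountableTopology X] [T1Space X]
    (F : Set (Set X)) (hcount : F.Countable)
    (hnet : IsNetwork F) (hclosed : ∀ A ∈ F, IsClosed A) :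
    Symmetrizable X := by
  classical
  rcases isEmpty_or_nonempty X with hX | hX
  · refine ⟨fun _ _ => 0, ⟨fun x => isEmptyElim x, fun x => isEmptyElim x,
      fun x => isEmptyElim x⟩, fun U => ?_⟩
    have : U = ∅ := Set.eq_empty_of_isEmpty U
    subst this
    simp
  · obtain ⟨x0⟩ := hX
    obtain ⟨A0, hA0, -, -⟩ := hnet Set.univ isOpen_univ x0 (Set.mem_univ x0)
    obtain ⟨A, hA⟩ := Set.Countable.exists_eq_range hcount ⟨A0, hA0⟩
    choose V hV using fun x : X => (𝓝 x).exists_antitone_basis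
    set Q : ℕ → X → X → Prop := fun m x y =>
      x ∈ A (Nat.unpair m).1 ∧ y ∉ A (Nat.unpair m).1 ∧ y ∉ V x (Nat.unpair m).2 with hQ
    set P : X → X → ℕ → Prop := fun x y m => Q m x y ∨ Q m y x with hP
    have hPsymm : ∀ x y, P x y = P y x := fun x y => funext fun m => propext or_comm
    have hex : ∀ x y : X, x ≠ y → ∃ m, P x y m := by
      intro x y hxy
      have hopen : IsOpen ({y}ᶜ : Set X) := isOpen_compl_singleton
      obtain ⟨A', hA'F, hxA', hsub⟩ := hnet {y}ᶜ hopen x (by simpa using hxy)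
      rw [hA] at hA'F
      obtain ⟨n, rfl⟩ := hA'F
      have hnbhd : ({y}ᶜ : Set X) ∈ 𝓝 x := hopen.mem_nhds (by simpa using hxy)
      obtain ⟨k, hk⟩ := (hV x).mem_iff.mp hnbhd
      refine ⟨Nat.pair n k, Or.inl ?_⟩
      simp only [hQ, Nat.unpair_pair]
      exact ⟨hxA', fun h => hsub h rfl, fun h => hk h rfl⟩
    set d : X → X → ℝ := fun x y =>
      if h : ∃ m, P x y m then 1 / (Nat.find h + 1) else 0 with hd
    have hnonneg : ∀ x y, 0 ≤ d x y := by
      intro x y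
      simp only [hd]
      split <;> positivity
    have hsymm : ∀ x y, d x y = d y x := by
      intro x y
      rcases eq_or_ne x y with rfl | hxy
      · rfl
      · have h1 := hex x y hxy
        have h2 := hex y x hxy.symm
        simp only [hd, dif_pos h1, dif_pos h2]
        have : Nat.find h1 = Nat.find h2 :=
          le_antisymm (Nat.find_min' h1 (Or.symm (Nat.find_spec h2)))
            (Nat.find_min' h2 (Or.symm (Nat.find_spec h1)))
        rw [this]
    have hnoself : ∀ x : X, ¬ ∃ m, P x x m := by
      rintro x ⟨m, hm | hm⟩ <;> exact hm.2.1 hm.1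
    have hzero : ∀ x y, d x y = 0 ↔ x = y := by
      intro x y
      constructor
      · intro h
        by_contra hxy
        rw [hd] at h
        simp only [dif_pos (hex x y hxy)] at h
        have : (0:ℝ) < 1 / (Nat.find (hex x y hxy) + 1) := by positivity
        linarith
      · rintro rfl
        simp only [hd, dif_neg (hnoself x)]
    -- every ball is a neighborhood
    have hball : ∀ x : X, ∀ ε : ℝ, 0 < ε → {y : X | d x y < ε} ∈ 𝓝 x := by
      intro x ε hε
      obtain ⟨N, hN⟩ := exists_nat_one_div_lt hε
      set C : ℕ → Set X := fun m =>
        if x ∈ A (Nat.unpair m).1 then V x (Nat.unpair m).2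
        else (A (Nat.unpair m).1)ᶜ with hC
      have hCmem : ∀ m, C m ∈ 𝓝 x := by
        intro m
        simp only [hC]
        split_ifs with hxA
        · exact (hV x).mem _
        · exact ((hclosed _ (hA ▸ Set.mem_range_self _)).isOpen_compl).mem_nhds hxA
      have hW : (⋂ m ∈ Finset.range N, C m) ∈ 𝓝 x := by
        rw [Filter.biInter_finset_mem]
        exact fun m _ => hCmem m
      refine Filter.mem_of_superset hW ?_
      intro y hy
      simp only [Set.mem_iInter, Finset.mem_range] at hy
      show d x y < ε
      rcases eq_or_ne x y with rfl | hxy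
      · rw [(hzero x x).mpr rfl]; exact hε
      · have h := hex x y hxy
        rw [hd]
        simp only [dif_pos h]
        have hfind : N ≤ Nat.find h := by
          rw [Nat.le_find_iff]
          intro m hm
          rintro (⟨h1, h2, h3⟩ | ⟨h1, h2, h3⟩)
          · have := hy m hm
            rw [hC] at this
            simp only [if_pos h1] at this
            exact h3 this
          · have := hy m hm
            rw [hC] at this
            simp only [if_neg h2] at this
            exact this h1
        calc 1 / ((Nat.find h : ℝ) + 1) ≤ 1 / ((N : ℝ) + 1) := by
              apply one_div_le_one_div_of_le
              · positivity
              · exact_mod_cast Nat.succ_le_succ hfind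
          _ < ε := hN
    refine ⟨d, ⟨hnonneg, hzero, hsymm⟩, fun U => ⟨?_, ?_⟩⟩
    · intro hU x hx
      obtain ⟨A', hA'F, hxA', hsubU⟩ := hnet U hU x hx
      rw [hA] at hA'F
      obtain ⟨n, rfl⟩ := hA'F
      obtain ⟨k, hk⟩ := (hV x).mem_iff.mp (hU.mem_nhds hx)
      refine ⟨1 / ((Nat.pair n k : ℝ) + 1), by positivity, ?_⟩
      intro y hy
      by_contra hyU
      have hxy : x ≠ y := fun h => hyU (h ▸ hx)
      have h := hex x y hxy
      have hQm : P x y (Nat.pair n k) := by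
        refine Or.inl ?_
        simp only [hQ, Nat.unpair_pair]
        exact ⟨hxA', fun hmem => hyU (hsubU hmem), fun hmem => hyU (hk hmem)⟩
      have hle : Nat.find h ≤ Nat.pair n k := Nat.find_le hQm
      have : 1 / ((Nat.pair n k : ℝ) + 1) ≤ 1 / ((Nat.find h : ℝ) + 1) := by
        apply one_div_le_one_div_of_le
        · positivity
        · exact_mod_cast Nat.succ_le_succ hle
      rw [Set.mem_setOf_eq, hd] at hy
      simp only [dif_pos h] at hy
      linarith
    · intro hU
      rw [isOpen_iff_mem_nhds]
      intro x hx
      obtain ⟨ε, hε, hsub⟩ := hU x hx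
      exact Filter.mem_of_superset (hball x ε hε) hsub
end

section
/- Let X be a first-countable Hausdorff topological space whose topology is generated by a symmetric d. Then for every point x ∈ X and every ε > 0, the point x lies in the interior of the ball B_d(x;ε) = {y ∈ X : d(x,y) < ε}. -/
/-- In a first-countable Hausdorff space whose topology is generated by a symmetric `d`,
every point lies in the interior of every ball around it. -/
theorem mem_interior_ball {X : Type*} [TopologicalSpace X]
    [FirstCountableTopology X] [T2Space X]
    (d : X → X → ℝ) (hsym : SymmetricDist d) (hgen : GeneratesTopology d)
    (x : X) (ε : ℝ) (hε : 0 < ε) :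
    x ∈ interior {y : X | d x y < ε} := by
  by_contra hx
  obtain ⟨u, hu⟩ := (nhds x).exists_antitone_basis
  -- choose points y n ∈ u n with d x (y n) ≥ ε
  have hy : ∀ n : ℕ, ∃ y, y ∈ u n ∧ ε ≤ d x y := by
    intro n
    by_contra h
    push_neg at h
    apply hx
    rw [mem_interior_iff_mem_nhds]
    exact Filter.mem_of_superset (hu.mem n) (fun y hy => h y hy)
  choose y hyu hyd using hy
  have htend : Filter.Tendsto y Filter.atTop (nhds x) := hu.tendsto hyu
  have hxD : x ∉ Set.range y := by
    rintro ⟨n, hn⟩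
    have : d x (y n) = 0 := (hsym.2.1 x (y n)).mpr hn.symm
    linarith [hyd n]
  -- closure of the range is contained in range ∪ {x}
  have hclos : closure (Set.range y) ⊆ Set.range y ∪ {x} := by
    intro z hz
    by_contra hzn
    simp only [Set.mem_union, Set.mem_singleton_iff, not_or] at hzn
    obtain ⟨hz1, hz2⟩ := hzn
    obtain ⟨V, W, hV, hW, hzV, hxW, hVW⟩ := t2_separation hz2
    have hmem : ∀ᶠ n in Filter.atTop, y n ∈ W := htend (hW.mem_nhds hxW)
    obtain ⟨N, hN⟩ := Filter.eventually_atTop.mp hmem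
    set F : Set X := y '' {n | n < N} with hF
    have hFfin : F.Finite := (Set.finite_lt_nat N).image y
    have hV' : IsOpen (V \ F) := hV.sdiff hFfin.isClosed
    have hzV' : z ∈ V \ F := by
      refine ⟨hzV, ?_⟩
      rintro ⟨n, _, hn⟩
      exact hz1 ⟨n, hn⟩
    obtain ⟨w, hwV', hwR⟩ := mem_closure_iff.mp hz (V \ F) hV' hzV'
    obtain ⟨n, rfl⟩ := hwR
    rcases lt_or_ge n N with hn | hn
    · exact hwV'.2 ⟨n, hn, rfl⟩
    · exact Set.disjoint_left.mp hVW hwV'.1 (hN n hn)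
  have hxcl : x ∈ closure (Set.range y) :=
    mem_closure_of_tendsto htend (Filter.Eventually.of_forall fun n => Set.mem_range_self n)
  -- the complement of the range is not open
  have hSnot : ¬ IsOpen (Set.range y)ᶜ := by
    intro hS
    obtain ⟨w, hw1, hw2⟩ := mem_closure_iff.mp hxcl _ hS hxD
    exact hw1 hw2
  rw [hgen] at hSnot
  push_neg at hSnot
  obtain ⟨z, hzS, hz⟩ := hSnot
  rcases eq_or_ne z x with rfl | hzx
  · obtain ⟨w, hw1, hw2⟩ := Set.not_subset.mp (hz ε hε)
    rw [Set.mem_compl_iff, not_not] at hw2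
    obtain ⟨n, rfl⟩ := hw2
    exact absurd hw1 (not_lt.mpr (hyd n))
  · have hzcl : z ∉ closure (Set.range y) := by
      intro h
      rcases hclos h with h1 | h1
      · exact hzS h1
      · exact hzx h1
    obtain ⟨δ, hδ, hball⟩ :=
      (hgen (closure (Set.range y))ᶜ).mp isClosed_closure.isOpen_compl z hzcl
    obtain ⟨w, hw1, hw2⟩ := Set.not_subset.mp (hz δ hδ)
    exact (hball hw1) (subset_closure (not_not.mp hw2))
end

section
/- Every perfect second-countable T1 topological space is symmetrizable. -/
open Set Classical in
/-- Every perfect second-countable T1 space is symmetrizable. -/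
theorem perfect_symmetrizable {X : Type*} [TopologicalSpace X]
    [SecondCountableTopology X] [T1Space X]
    (hperf : ∀ F : Set X, IsClosed F → IsGδ F) :
    Symmetrizable X := by
  classical
  obtain ⟨b, hbc, -, hb⟩ := TopologicalSpace.exists_countable_basis X
  -- For each basic open B, its complement is a Gδ, so B is a countable union of closed sets.
  choose! T hTopen hTc hTeq using fun B (hB : B ∈ b) =>
    hperf Bᶜ (hb.isOpen hB).isClosed_compl
  -- The countable family of pairs (closed set, basic open containing it)
  set P : Set (Set X × Set X) := (⋃ B ∈ b, (fun t => (tᶜ, B)) '' (T B)) with hP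
  have hPc : P.Countable := hbc.biUnion fun B hB => ((hTc B hB).image _)
  set P' : Set (Set X × Set X) := insert (∅, ∅) P with hP'
  obtain ⟨f, hf⟩ : ∃ f : ℕ → Set X × Set X, P' = range f :=
    (hPc.insert _).exists_eq_range ⟨_, mem_insert _ _⟩
  have hmemP : ∀ p ∈ P, IsClosed p.1 ∧ IsOpen p.2 ∧ p.1 ⊆ p.2 := by
    intro p hp
    simp only [hP, mem_iUnion, mem_image] at hp
    obtain ⟨B, hB, t, ht, rfl⟩ := hp
    refine ⟨(hTopen B hB t ht).isClosed_compl, hb.isOpen hB, ?_⟩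
    have : Bᶜ ⊆ t := (hTeq B hB) ▸ sInter_subset_of_mem ht
    exact compl_subset_comm.mp (by simpa using this)
  have hfn : ∀ n, IsClosed (f n).1 ∧ IsOpen (f n).2 ∧ (f n).1 ⊆ (f n).2 := by
    intro n
    have : f n ∈ P' := hf ▸ mem_range_self n
    rcases this with h | h
    · rw [h]; exact ⟨isClosed_empty, isOpen_empty, subset_rfl⟩
    · exact hmemP _ h
  have hcov : ∀ (x : X) (U : Set X), IsOpen U → x ∈ U →
      ∃ n, x ∈ (f n).1 ∧ (f n).2 ⊆ U := by
    intro x U hU hxU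
    obtain ⟨B, hB, hxB, hBU⟩ := hb.exists_subset_of_mem_open hxU hU
    have hxc : x ∉ ⋂₀ T B := by rw [← hTeq B hB]; simpa using hxB
    obtain ⟨t, ht, hxt⟩ := by simpa using hxc
    have hmem : (tᶜ, B) ∈ P' := Or.inr (by
      simp only [hP, mem_iUnion, mem_image]; exact ⟨B, hB, t, ht, rfl⟩)
    rw [hf] at hmem
    obtain ⟨n, hn⟩ := hmem
    exact ⟨n, by rw [hn]; exact hxt, by rw [hn]; exact hBU⟩
  -- the separation relation
  set Sep : ℕ → X → X → Prop :=
    fun n x y => (x ∈ (f n).1 ∧ y ∉ (f n).2) ∨ (y ∈ (f n).1 ∧ x ∉ (f n).2) with hSep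
  have hSepsymm : ∀ n x y, Sep n x y → Sep n y x := fun n x y h => h.symm
  have hSepself : ∀ n x, ¬ Sep n x x := by
    rintro n x (⟨h1, h2⟩ | ⟨h1, h2⟩) <;> exact h2 ((hfn n).2.2 h1)
  set d : X → X → ℝ := fun x y =>
    if h : ∃ n, Sep n x y then 1 / (Nat.find h + 1 : ℝ) else 0 with hd
  have hex : ∀ x y : X, x ≠ y → ∃ n, Sep n x y := by
    intro x y hxy
    obtain ⟨n, hn1, hn2⟩ := hcov x {y}ᶜ isOpen_compl_singleton (by simpa using hxy)
    exact ⟨n, Or.inl ⟨hn1, fun hy => (hn2 hy) rfl⟩⟩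
  have hnonneg : ∀ x y, 0 ≤ d x y := by
    intro x y; rw [hd]; dsimp only
    split
    · positivity
    · exact le_refl 0
  have hzero : ∀ x y, d x y = 0 ↔ x = y := by
    intro x y
    constructor
    · intro h
      by_contra hxy
      rw [hd] at h; dsimp only at h
      rw [dif_pos (hex x y hxy)] at h
      have : (0:ℝ) < 1 / (Nat.find (hex x y hxy) + 1 : ℝ) := by positivity
      rw [h] at this; exact lt_irrefl 0 this
    · rintro rfl
      rw [hd]; dsimp only
      rw [dif_neg]; push_neg; exact fun n => hSepself n x
  have hsymm : ∀ x y, d x y = d y x := by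
    intro x y
    rw [hd]; dsimp only
    by_cases h1 : ∃ n, Sep n x y
    · have h2 : ∃ n, Sep n y x := ⟨Nat.find h1, hSepsymm _ _ _ (Nat.find_spec h1)⟩
      rw [dif_pos h1, dif_pos h2]
      have heq : Nat.find h1 = Nat.find h2 :=
        le_antisymm (Nat.find_min' h1 (hSepsymm _ _ _ (Nat.find_spec h2)))
          (Nat.find_min' h2 (hSepsymm _ _ _ (Nat.find_spec h1)))
      rw [heq]
    · have h2 : ¬ ∃ n, Sep n y x := fun ⟨n, hn⟩ => h1 ⟨n, hSepsymm _ _ _ hn⟩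
      rw [dif_neg h1, dif_neg h2]
  refine ⟨d, ⟨hnonneg, hzero, hsymm⟩, ?_⟩
  intro U
  constructor
  · -- open ⇒ ball condition
    intro hU x hxU
    obtain ⟨n, hx1, hn2⟩ := hcov x U hU hxU
    refine ⟨1 / (n + 1 : ℝ), by positivity, ?_⟩
    intro y hy
    have hy' : d x y < 1 / (n + 1 : ℝ) := hy
    by_contra hyU
    have hsep : Sep n x y := Or.inl ⟨hx1, fun h => hyU (hn2 h)⟩
    have hexy : ∃ m, Sep m x y := ⟨n, hsep⟩
    have hfind : Nat.find hexy ≤ n := Nat.find_min' hexy hsep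
    have : d x y = 1 / (Nat.find hexy + 1 : ℝ) := by rw [hd]; dsimp only; rw [dif_pos hexy]
    rw [this] at hy'
    have : (1:ℝ) / (n + 1 : ℝ) ≤ 1 / (Nat.find hexy + 1 : ℝ) := by
      apply one_div_le_one_div_of_le
      · positivity
      · exact_mod_cast Nat.succ_le_succ hfind
    exact absurd hy' (not_lt.mpr this)
  · -- ball condition ⇒ open
    intro hball
    rw [isOpen_iff_forall_mem_open]
    intro x hxU
    obtain ⟨ε, hε, hballsub⟩ := hball x hxU
    obtain ⟨N, hN⟩ := exists_nat_one_div_lt hε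
    -- the open set around x
    set V : Set X := ⋂ n ∈ Finset.range (N + 1),
      ((if x ∈ (f n).1 then (f n).2 else univ) ∩
       (if x ∈ (f n).2 then univ else ((f n).1)ᶜ)) with hV
    have hVopen : IsOpen V := by
      apply isOpen_biInter_finset
      intro n _
      apply IsOpen.inter
      · split
        · exact (hfn n).2.1
        · exact isOpen_univ
      · split
        · exact isOpen_univ
        · exact (hfn n).1.isOpen_compl
    have hxV : x ∈ V := by
      rw [hV]
      refine mem_iInter₂.mpr fun n _ => ⟨?_, ?_⟩
      · split
        · next h => exact (hfn n).2.2 h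
        · exact mem_univ x
      · split
        · exact mem_univ x
        · next h => exact fun hc => h ((hfn n).2.2 hc)
    refine ⟨V, ?_, hVopen, hxV⟩
    intro y hyV
    apply hballsub
    show d x y < ε
    -- no n ≤ N separates x and y
    have hnosep : ∀ n ≤ N, ¬ Sep n x y := by
      intro n hn hsep
      have hyW := mem_iInter₂.mp hyV n (Finset.mem_range.mpr (Nat.lt_succ_of_le hn))
      rcases hsep with ⟨h1, h2⟩ | ⟨h1, h2⟩
      · have := hyW.1
        rw [if_pos h1] at this
        exact h2 this
      · have := hyW.2
        rw [if_neg h2] at this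
        exact this h1
    rw [hd]; dsimp only
    split
    · next h =>
      have hfind : N < Nat.find h := by
        by_contra hc
        exact hnosep _ (not_lt.mp hc) (Nat.find_spec h)
      calc (1:ℝ) / (Nat.find h + 1 : ℝ) ≤ 1 / (N + 1 + 1 : ℝ) := by
            apply one_div_le_one_div_of_le
            · positivity
            · exact_mod_cast Nat.succ_le_succ hfind
        _ < 1 / (N + 1 : ℝ) := by
            apply one_div_lt_one_div_of_lt
            · positivity
            · linarith
        _ < ε := hN
    · exact hε
end

section
/- A second-countable Hausdorff topological space is symmetrizable if and only if it is perfect. -/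
open Filter Topology Set TopologicalSpace

/-- Key lemma: in a Hausdorff symmetrizable space, a sequence converging to `y`
cannot stay uniformly `d`-far from `y`. -/
lemma symm_key {X : Type*} [TopologicalSpace X] [T2Space X]
    {d : X → X → ℝ} (hd : SymmetricDist d) (hg : GeneratesTopology d)
    {y : X} {δ : ℝ} (hδ : 0 < δ) (z : ℕ → X)
    (hz : Tendsto z atTop (𝓝 y)) (hdist : ∀ k, δ ≤ d y (z k)) : False := by
  obtain ⟨hnonneg, hzero, hsymm⟩ := hd
  have hyT : y ∉ Set.range z := by
    rintro ⟨k, hk⟩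
    have h1 := hdist k
    rw [hk, (hzero y y).mpr rfl] at h1
    linarith
  have hnotopen : ¬ IsOpen (Set.range z)ᶜ := by
    intro ho
    have h1 : ∀ᶠ k in atTop, z k ∈ (Set.range z)ᶜ := hz.eventually (ho.eventually_mem hyT)
    obtain ⟨k, hk⟩ := h1.exists
    exact hk ⟨k, rfl⟩
  have hx : ∃ x, x ∉ Set.range z ∧ ∀ ε, 0 < ε → ∃ k, d x (z k) < ε := by
    by_contra hcon
    push_neg at hcon
    apply hnotopen
    rw [hg]
    intro x hxmem
    obtain ⟨ε, hε, hb⟩ := hcon x hxmem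
    refine ⟨ε, hε, fun w hw => ?_⟩
    rintro ⟨k, rfl⟩
    exact absurd hw (not_lt.mpr (hb k))
  obtain ⟨x, hxT, hxnear⟩ := hx
  have hxy : x ≠ y := by
    rintro rfl
    obtain ⟨k, hk⟩ := hxnear δ hδ
    exact absurd hk (not_lt.mpr (hdist k))
  obtain ⟨W, V, hW, hV, hxW, hyV, hdisj⟩ := t2_separation hxy
  obtain ⟨ρ, hρ, hball⟩ := (hg W).mp hW x hxW
  have hev : ∀ᶠ k in atTop, z k ∈ V := hz.eventually (hV.eventually_mem hyV)
  obtain ⟨N, hN⟩ := eventually_atTop.mp hev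
  have hzx : ∀ k, 0 < d x (z k) := by
    intro k
    rcases lt_or_eq_of_le (hnonneg x (z k)) with h | h
    · exact h
    · exact absurd ((hzero x (z k)).mp h.symm) (fun he => hxT ⟨k, he.symm⟩)
  have hrne : (Finset.range (N + 1)).Nonempty := ⟨N, Finset.self_mem_range_succ N⟩
  set ρ' := (Finset.range (N + 1)).inf' hrne (fun k => d x (z k)) with hρ'def
  have hρ'pos : 0 < ρ' := (Finset.lt_inf'_iff hrne).mpr (fun i _ => hzx i)
  obtain ⟨k, hk⟩ := hxnear (min ρ ρ') (lt_min hρ hρ'pos)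
  have hkW : z k ∈ W := hball (lt_of_lt_of_le hk (min_le_left _ _))
  have hkV : z k ∉ V := fun hmem => Set.disjoint_left.mp hdisj hkW hmem
  have hkN : k < N := by
    by_contra h
    exact hkV (hN k (le_of_not_gt h))
  have hle : ρ' ≤ d x (z k) :=
    Finset.inf'_le _ (Finset.mem_range.mpr (Nat.lt_succ_of_lt hkN))
  have := lt_of_lt_of_le hk (min_le_right _ _)
  linarith

/-- A second-countable Hausdorff space is symmetrizable iff it is perfect. -/
theorem symmetrizable_iff_perfect {X : Type*} [TopologicalSpace X]
    [SecondCountableTopology X] [T2Space X] :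
    Symmetrizable X ↔ (∀ F : Set X, IsClosed F → IsGδ F) := by
  constructor
  · rintro ⟨d, hd, hg⟩ F hF
    obtain ⟨hnonneg, hzero, hsymm⟩ := hd
    have hFeq : F = ⋂ n : ℕ, (closure {x | ∀ y ∈ F, ((n : ℝ) + 1)⁻¹ ≤ d x y})ᶜ := by
      apply Set.Subset.antisymm
      · intro y hyF
        refine Set.mem_iInter.mpr (fun n hmem => ?_)
        obtain ⟨z, hzS, hz⟩ := mem_closure_iff_seq_limit.mp hmem
        refine symm_key ⟨hnonneg, hzero, hsymm⟩ hg
          (δ := ((n : ℝ) + 1)⁻¹) (by positivity) z hz (fun k => ?_)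
        rw [hsymm]
        exact hzS k y hyF
      · intro x hx
        by_contra hxF
        obtain ⟨ε, hε, hball⟩ := (hg Fᶜ).mp hF.isOpen_compl x hxF
        obtain ⟨n, hn⟩ := exists_nat_one_div_lt hε
        rw [one_div] at hn
        have hxS : x ∈ {x | ∀ y ∈ F, ((n : ℝ) + 1)⁻¹ ≤ d x y} := by
          intro y hyF
          by_contra h
          push_neg at h
          exact (hball (lt_trans h hn)) hyF
        exact (Set.mem_iInter.mp hx n) (subset_closure hxS)
    rw [hFeq]
    exact IsGδ.iInter (fun n => isClosed_closure.isOpen_compl.isGδ)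
  · intro hperf
    by_cases hne : Nonempty X
    swap
    · have hE : IsEmpty X := not_nonempty_iff.mp hne
      refine ⟨fun _ _ => 0, ⟨fun x => hE.elim x, fun x => hE.elim x, fun x => hE.elim x⟩,
        fun U => ⟨fun _ x => hE.elim x, fun _ => ?_⟩⟩
      rw [Set.eq_empty_of_isEmpty U]
      exact isOpen_empty
    obtain ⟨b, hbc, hbne', hbasis⟩ := TopologicalSpace.exists_countable_basis X
    have hbnonempty : b.Nonempty := by
      obtain ⟨x⟩ := hne
      obtain ⟨v, hv, _, _⟩ := hbasis.exists_subset_of_mem_open (Set.mem_univ x) isOpen_univ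
      exact ⟨v, hv⟩
    obtain ⟨f, hf⟩ := hbc.exists_eq_range hbnonempty
    have hfopen : ∀ n, IsOpen (f n) := fun n => hbasis.isOpen (hf ▸ ⟨n, rfl⟩)
    have hdecomp : ∀ n : ℕ, ∃ C : ℕ → Set X, (∀ k, IsClosed (C k)) ∧ (⋃ k, C k) = f n := by
      intro n
      obtain ⟨T, hTopen, hTc, hTeq⟩ := hperf (f n)ᶜ (hfopen n).isClosed_compl
      obtain ⟨g, hg⟩ := (hTc.insert Set.univ).exists_eq_range ⟨Set.univ, Set.mem_insert _ _⟩
      have hgopen : ∀ k, IsOpen (g k) := by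
        intro k
        have hmem : g k ∈ insert Set.univ T := hg ▸ ⟨k, rfl⟩
        rcases Set.mem_insert_iff.mp hmem with h | h
        · rw [h]; exact isOpen_univ
        · exact hTopen _ h
      have h1 : (⋂ k, g k) = (f n)ᶜ := by
        rw [← Set.sInter_range, ← hg, Set.sInter_insert, ← hTeq, Set.univ_inter]
      refine ⟨fun k => (g k)ᶜ, fun k => (hgopen k).isClosed_compl, ?_⟩
      calc (⋃ k, (g k)ᶜ) = (⋂ k, g k)ᶜ := (Set.compl_iInter g).symm
        _ = ((f n)ᶜ)ᶜ := by rw [h1]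
        _ = f n := compl_compl _
    choose C0 hC0closed hC0union using hdecomp
    set Cm : ℕ → Set X := fun m => C0 m.unpair.1 m.unpair.2 with hCm
    set Vm : ℕ → Set X := fun m => f m.unpair.1 with hVm
    have hCclosed : ∀ m, IsClosed (Cm m) := fun m => hC0closed _ _
    have hVopen : ∀ m, IsOpen (Vm m) := fun m => hfopen _
    have hCV : ∀ m, Cm m ⊆ Vm m := by
      intro m x hx
      show x ∈ f m.unpair.1
      rw [← hC0union m.unpair.1]
      exact Set.mem_iUnion.mpr ⟨m.unpair.2, hx⟩
    have reach : ∀ (x : X) (U : Set X), IsOpen U → x ∈ U → ∃ m, x ∈ Cm m ∧ Vm m ⊆ U := by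
      intro x U hU hxU
      obtain ⟨v, hvb, hxv, hvU⟩ := hbasis.exists_subset_of_mem_open hxU hU
      rw [hf] at hvb
      obtain ⟨n, rfl⟩ := hvb
      have hxu : x ∈ ⋃ k, C0 n k := (hC0union n).symm ▸ hxv
      obtain ⟨k, hk⟩ := Set.mem_iUnion.mp hxu
      refine ⟨Nat.pair n k, ?_, ?_⟩
      · simpa [hCm, Nat.unpair_pair] using hk
      · simpa [hVm, Nat.unpair_pair] using hvU
    set Sep : X → X → Set ℕ :=
      fun x y => {m | (x ∈ Cm m ∧ y ∉ Vm m) ∨ (y ∈ Cm m ∧ x ∉ Vm m)} with hSepdef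
    have hSepsymm : ∀ x y, Sep x y = Sep y x := by
      intro x y; ext m; simp only [hSepdef, Set.mem_setOf_eq]; tauto
    have hSepne : ∀ {x y : X}, x ≠ y → (Sep x y).Nonempty := by
      intro x y hxy
      obtain ⟨m, hmC, hmV⟩ := reach x {y}ᶜ isOpen_compl_singleton (by simpa using hxy)
      exact ⟨m, Or.inl ⟨hmC, fun h => (hmV h) rfl⟩⟩
    classical
    set d : X → X → ℝ :=
      fun x y => if x = y then 0 else (((sInf (Sep x y) + 1 : ℕ)) : ℝ)⁻¹ with hddef
    have dself : ∀ x, d x x = 0 := fun x => by simp [hddef]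
    have dpos : ∀ {x y : X}, x ≠ y → 0 < d x y := by
      intro x y h
      simp only [hddef, if_neg h]
      positivity
    have deq : ∀ {x y : X}, x ≠ y → d x y = (((sInf (Sep x y) + 1 : ℕ)) : ℝ)⁻¹ := by
      intro x y h; simp [hddef, if_neg h]
    have hdsym : SymmetricDist d := by
      refine ⟨fun x y => ?_, fun x y => ⟨fun h0 => ?_, fun h => ?_⟩, fun x y => ?_⟩
      · by_cases h : x = y
        · subst h; rw [dself]
        · exact (dpos h).le
      · by_contra h
        exact absurd h0 (dpos h).ne'
      · subst h; exact dself x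
      · by_cases h : x = y
        · subst h; rfl
        · have h' : y ≠ x := fun e => h e.symm
          rw [deq h, deq h', hSepsymm x y]
    refine ⟨d, hdsym, fun U => ⟨?_, ?_⟩⟩
    · -- open ⇒ ball condition
      intro hU x hx
      obtain ⟨m, hxC, hVU⟩ := reach x U hU hx
      refine ⟨((m : ℝ) + 1)⁻¹, by positivity, fun y hy => ?_⟩
      simp only [Set.mem_setOf_eq] at hy
      by_cases hxy : x = y
      · exact hxy ▸ hx
      · rw [deq hxy] at hy
        have h1 : (m : ℝ) + 1 < ((sInf (Sep x y) + 1 : ℕ) : ℝ) :=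
          (inv_lt_inv₀ (by positivity) (by positivity)).mp hy
        have h2 : m < sInf (Sep x y) := by
          push_cast at h1
          have h1' : (m : ℝ) < ((sInf (Sep x y) : ℕ) : ℝ) := by linarith
          exact_mod_cast h1'
        have h3 := Nat.notMem_of_lt_sInf h2
        simp only [hSepdef, Set.mem_setOf_eq, not_or, not_and] at h3
        have h4 : y ∈ Vm m := by
          by_contra h
          exact (h3.1 hxC) h
        exact hVU h4
    · -- ball condition ⇒ open
      intro hballs
      rw [← isClosed_compl_iff]
      apply isClosed_of_closure_subset
      intro x hxcl
      by_contra hxU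
      rw [Set.mem_compl_iff, not_not] at hxU
      obtain ⟨ε, hε, hball⟩ := hballs x hxU
      obtain ⟨z, hzS, hz⟩ := mem_closure_iff_seq_limit.mp hxcl
      have hzne : ∀ k, x ≠ z k := by
        rintro k rfl
        exact (hzS k) hxU
      have hdge : ∀ k, ε ≤ d x (z k) := by
        intro k
        by_contra h
        push_neg at h
        exact (hzS k) (hball h)
      set m' : ℕ → ℕ := fun k => sInf (Sep x (z k)) with hm'def
      have hm'mem : ∀ k, m' k ∈ Sep x (z k) := fun k => Nat.sInf_mem (hSepne (hzne k))
      set M : ℕ := ⌈ε⁻¹⌉₊ with hMdef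
      have hm'lt : ∀ k, m' k < M + 1 := by
        intro k
        have h1 : ε ≤ (((m' k + 1 : ℕ)) : ℝ)⁻¹ := by
          rw [← deq (hzne k)]; exact hdge k
        have h2 : (((m' k + 1 : ℕ)) : ℝ) ≤ ε⁻¹ := by
          have h3 := inv_anti₀ hε h1
          rwa [inv_inv] at h3
        push_cast at h2
        have h4 : ((m' k : ℝ) + 1) ≤ (M : ℝ) := le_trans h2 (Nat.le_ceil _)
        have h5 : (m' k : ℝ) < (M : ℝ) + 1 := by linarith
        exact_mod_cast h5
      obtain ⟨i0, hi0⟩ := Finite.exists_infinite_fiber (fun k => (⟨m' k, hm'lt k⟩ : Fin (M + 1)))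
      have hinf : {k | m' k = (i0 : ℕ)}.Infinite := by
        refine (Set.infinite_coe_iff.mp hi0).mono ?_
        intro k hk
        simp only [Set.mem_preimage, Set.mem_singleton_iff] at hk
        exact congrArg Fin.val hk
      have hfreq : ∃ᶠ k in atTop, m' k = (i0 : ℕ) := Nat.frequently_atTop_iff_infinite.mpr hinf
      set m : ℕ := (i0 : ℕ) with hm
      have hfreq2 : ∃ᶠ k in atTop,
          (x ∈ Cm m ∧ z k ∉ Vm m) ∨ (z k ∈ Cm m ∧ x ∉ Vm m) := by
        refine hfreq.mono (fun k hk => ?_)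
        have := hm'mem k
        rw [hk] at this
        simpa [hSepdef] using this
      rcases frequently_or_distrib.mp hfreq2 with hA | hB
      · obtain ⟨k0, hxC, _⟩ := hA.exists
        have hev : ∀ᶠ k in atTop, z k ∈ Vm m :=
          hz.eventually ((hVopen m).eventually_mem (hCV m hxC))
        obtain ⟨k, hk1, hk2⟩ := (hA.and_eventually hev).exists
        exact hk1.2 hk2
      · obtain ⟨k0, _, hxV⟩ := hB.exists
        have hxc : x ∈ closure (Cm m) :=
          mem_closure_of_frequently_of_tendsto (hB.mono fun k hk => hk.1) hz
        rw [(hCclosed m).closure_eq] at hxc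
        exact hxV (hCV m hxc)
end

section
/- Let X be a second-countable submetrizable topological space such that every second-countable metrizable topological space of cardinality at most the cardinality of X is a Q-space (equivalently, the cardinality of X is strictly less than the cardinal 𝔮₀, the smallest cardinality of a second-countable metrizable space that is not a Q-space). Then X is symmetrizable. -/
/-- A topological space is a Q-space if every subset is a Gδ-set. -/
def QSpace (X : Type*) [TopologicalSpace X] : Prop := ∀ A : Set X, IsGδ A

/-- A topological space is submetrizable if there is a coarser metrizable topology. -/
def Submetrizable (X : Type*) [t : TopologicalSpace X] : Prop :=
  ∃ t' : TopologicalSpace X, (∀ U : Set X, t'.IsOpen U → t.IsOpen U) ∧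
    @TopologicalSpace.MetrizableSpace X t'

universe u


lemma exists_rho_aux (X : Type u) (t' : TopologicalSpace X)
    (hm : @TopologicalSpace.MetrizableSpace X t') :
    ∃ ρ : X → X → ℝ,
      (∀ x y, 0 ≤ ρ x y) ∧ (∀ x y, ρ x y = 0 ↔ x = y) ∧ (∀ x y, ρ x y = ρ y x) ∧
      (∀ (x : X) (ε : ℝ), 0 < ε → @IsOpen X t' {y | ρ x y < ε}) ∧
      (∀ F : Set X, @IsClosed X t' F → ∀ x : X,
         (∀ ε : ℝ, 0 < ε → ∃ y ∈ F, ρ x y < ε) → x ∈ F) := by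
  obtain ⟨m, hmeq⟩ : ∃ m : MetricSpace X, m.toUniformSpace.toTopologicalSpace = t' :=
    ⟨@TopologicalSpace.metrizableSpaceMetric X t' hm, rfl⟩
  subst hmeq
  letI := m
  refine ⟨dist, fun x y => dist_nonneg, fun x y => dist_eq_zero, fun x y => dist_comm x y,
    fun x ε hε => ?_, fun F hF x hx => ?_⟩
  · have : {y | dist x y < ε} = Metric.ball x ε := by
      ext y; simp [Metric.mem_ball, dist_comm]
    rw [this]; exact Metric.isOpen_ball
  · have : x ∈ closure F := Metric.mem_closure_iff.mpr hx
    rwa [hF.closure_eq] at this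


lemma sc_of_coarser (X : Type u) (t t' : TopologicalSpace X)
    (hle : ∀ U : Set X, @IsOpen X t' U → @IsOpen X t U)
    (hsc : @SecondCountableTopology X t)
    (hm : @TopologicalSpace.MetrizableSpace X t') :
    @SecondCountableTopology X t' := by
  obtain ⟨D, hDc, hDd⟩ := @TopologicalSpace.exists_countable_dense X t
    (@TopologicalSpace.SecondCountableTopology.to_separableSpace X t hsc)
  have hDd' : @Dense X t' D := by
    intro x
    rw [@mem_closure_iff X t' x D]
    intro o ho hxo
    exact (@mem_closure_iff X t x D).mp (hDd x) o (hle o ho) hxo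
  haveI : @TopologicalSpace.SeparableSpace X t' := ⟨⟨D, hDc, hDd'⟩⟩
  obtain ⟨m, hmeq⟩ : ∃ m : MetricSpace X, m.toUniformSpace.toTopologicalSpace = t' :=
    ⟨@TopologicalSpace.metrizableSpaceMetric X t' hm, rfl⟩
  subst hmeq
  letI := m
  exact UniformSpace.secondCountable_of_separable X


open Filter Topology


lemma core_sym {X : Type u} [TopologicalSpace X]
    (b : ℕ → Set X) (hbopen : ∀ n, IsOpen (b n))
    (hbbase : ∀ U : Set X, IsOpen U → ∀ x ∈ U, ∃ n, x ∈ b n ∧ b n ⊆ U)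
    (ρ : X → X → ℝ)
    (hρnn : ∀ x y, 0 ≤ ρ x y) (hρeq : ∀ x y, ρ x y = 0 ↔ x = y)
    (hρsym : ∀ x y, ρ x y = ρ y x)
    (hρball : ∀ (x : X) (ε : ℝ), 0 < ε → IsOpen {y | ρ x y < ε})
    (hseq : ∀ (s : Set X) (x : X), x ∈ closure s →
      ∃ u : ℕ → X, (∀ k, u k ∈ s) ∧ Tendsto u atTop (𝓝 x))
    (F : ℕ → ℕ → Set X)
    (hFc : ∀ n m (x : X), (∀ ε : ℝ, 0 < ε → ∃ y ∈ F n m, ρ x y < ε) → x ∈ F n m)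
    (hFeq : ∀ n, b n = ⋃ m, F n m) :
    ∃ d : X → X → ℝ,
      ((∀ x y, 0 ≤ d x y) ∧ (∀ x y, d x y = 0 ↔ x = y) ∧ (∀ x y, d x y = d y x)) ∧
      (∀ U : Set X, IsOpen U ↔ ∀ x ∈ U, ∃ ε > 0, {y : X | d x y < ε} ⊆ U) := by
  classical
  have hFsub : ∀ n m, F n m ⊆ b n := fun n m x hx =>
    (hFeq n) ▸ Set.mem_iUnion.mpr ⟨m, hx⟩
  -- weight functions
  set h : ℕ → X → ℝ := fun n x =>
    if hx : ∃ m, x ∈ F n m then (1/2 : ℝ) ^ (Nat.find hx) else 0 with hhdef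
  have hnn : ∀ n x, 0 ≤ h n x := by
    intro n x; simp only [hhdef]; split <;> positivity
  have hle1 : ∀ n x, h n x ≤ 1 := by
    intro n x; simp only [hhdef]; split
    · exact pow_le_one₀ (by norm_num) (by norm_num)
    · norm_num
  have hpos : ∀ n x, x ∈ b n → 0 < h n x := by
    intro n x hx
    have hex : ∃ m, x ∈ F n m := by
      rw [hFeq n] at hx; exact Set.mem_iUnion.mp hx
    simp only [hhdef]; rw [dif_pos hex]; positivity
  have hzero : ∀ n x, x ∉ b n → h n x = 0 := by
    intro n x hx
    have hex : ¬ ∃ m, x ∈ F n m := fun ⟨m, hm⟩ => hx (hFsub n m hm)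
    simp only [hhdef]; rw [dif_neg hex]
  have hhsmall : ∀ n (M : ℕ) (x : X), x ∉ (⋃ i : Fin (M+1), F n i.val) →
      h n x ≤ (1/2 : ℝ) ^ (M+1) := by
    intro n M x hx
    simp only [hhdef]
    split
    · rename_i hex
      have hfind : M + 1 ≤ Nat.find hex := by
        by_contra hlt
        push_neg at hlt
        exact hx (Set.mem_iUnion.mpr ⟨⟨Nat.find hex, hlt⟩, Nat.find_spec hex⟩)
      exact pow_le_pow_of_le_one (by norm_num) (by norm_num) hfind
    · positivity
  -- complements of finite unions of the F's are open
  have hCopen : ∀ n (M : ℕ), IsOpen (⋃ i : Fin (M+1), F n i.val)ᶜ := by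
    intro n M
    rw [isOpen_iff_forall_mem_open]
    intro x hx
    have hnotapprox : ¬ (∀ ε : ℝ, 0 < ε → ∃ y ∈ (⋃ i : Fin (M+1), F n i.val), ρ x y < ε) := by
      intro hc
      apply hx
      by_contra hnotin
      have hi : ∀ i : Fin (M+1), ∃ εi : ℝ, 0 < εi ∧ ∀ y ∈ F n i.val, εi ≤ ρ x y := by
        intro i
        by_contra hno
        push_neg at hno
        refine hnotin (Set.mem_iUnion.mpr ⟨i, ?_⟩)
        exact hFc n i.val x (fun ε hε => hno ε hε)
      choose εi hεipos hεi using hi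
      obtain ⟨j, hj⟩ := Finite.exists_min εi
      obtain ⟨y, hy, hylt⟩ := hc (εi j) (hεipos j)
      obtain ⟨i, hyi⟩ := Set.mem_iUnion.mp hy
      exact absurd hylt (not_lt.mpr (le_trans (hj i) (hεi i y hyi)))
    push_neg at hnotapprox
    obtain ⟨ε, hεpos, hεsep⟩ := hnotapprox
    refine ⟨{y | ρ x y < ε}, ?_, hρball x ε hεpos, by simp [(hρeq x x).mpr rfl, hεpos]⟩
    intro y hy hyin
    simp only [Set.mem_setOf_eq] at hy
    exact absurd hy (not_lt.mpr (hεsep y hyin))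
  -- the symmetric
  set δ : ℕ → X → X → ℝ := fun n x y =>
    if (x ∈ b n ↔ y ∈ b n) then 0 else h n x + h n y with hδdef
  have hδnn : ∀ n x y, 0 ≤ δ n x y := by
    intro n x y; simp only [hδdef]; split
    · exact le_rfl
    · exact add_nonneg (hnn n x) (hnn n y)
  have hδle2 : ∀ n x y, δ n x y ≤ 2 := by
    intro n x y; simp only [hδdef]; split
    · norm_num
    · linarith [hle1 n x, hle1 n y]
  have hsum : ∀ x y, Summable (fun n => δ n x y * (1/2 : ℝ) ^ n) := by
    intro x y
    apply Summable.of_nonneg_of_le (f := fun n => 2 * (1/2 : ℝ) ^ n)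
    · intro n; exact mul_nonneg (hδnn n x y) (by positivity)
    · intro n; exact mul_le_mul_of_nonneg_right (hδle2 n x y) (by positivity)
    · exact (summable_geometric_of_lt_one (by norm_num) (by norm_num)).mul_left 2
  set d : X → X → ℝ := fun x y => ρ x y + ∑' n, δ n x y * (1/2 : ℝ) ^ n with hddef
  have hdnn : ∀ x y, 0 ≤ d x y := fun x y =>
    add_nonneg (hρnn x y) (tsum_nonneg fun n => mul_nonneg (hδnn n x y) (by positivity))
  have hdρ : ∀ x y, ρ x y ≤ d x y := fun x y =>
    le_add_of_nonneg_right (tsum_nonneg fun n => mul_nonneg (hδnn n x y) (by positivity))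
  refine ⟨d, ⟨hdnn, ?_, ?_⟩, ?_⟩
  · -- d x y = 0 ↔ x = y
    intro x y
    constructor
    · intro h0
      exact (hρeq x y).mp (le_antisymm (h0 ▸ hdρ x y) (hρnn x y))
    · rintro rfl
      simp only [hddef]
      have hz : ∀ n, δ n x x * (1/2 : ℝ) ^ n = 0 := by
        intro n; simp only [hδdef, if_pos Iff.rfl, zero_mul]
      rw [(hρeq x x).mpr rfl, tsum_congr hz, tsum_zero, add_zero]
  · -- symmetry
    intro x y
    simp only [hddef]
    rw [hρsym x y]
    congr 1
    apply tsum_congr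
    intro n
    congr 1
    simp only [hδdef]
    by_cases hc : (x ∈ b n ↔ y ∈ b n)
    · rw [if_pos hc, if_pos (iff_comm.mp hc)]
    · rw [if_neg hc, if_neg (fun hcc => hc (iff_comm.mp hcc)), add_comm]
  · -- generates the topology
    intro U
    constructor
    · -- open implies ball property
      intro hU x hx
      obtain ⟨n, hxb, hbU⟩ := hbbase U hU x hx
      refine ⟨h n x * (1/2 : ℝ) ^ n, mul_pos (hpos n x hxb) (by positivity), fun y hy => ?_⟩
      simp only [Set.mem_setOf_eq] at hy
      apply hbU
      by_contra hyb
      have hterm : h n x * (1/2 : ℝ) ^ n ≤ δ n x y * (1/2 : ℝ) ^ n := by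
        have hδe : δ n x y = h n x + h n y := by
          simp only [hδdef]
          rw [if_neg (fun hc => hyb (hc.mp hxb))]
        rw [hδe]
        exact mul_le_mul_of_nonneg_right (le_add_of_nonneg_right (hnn n y)) (by positivity)
      have htsum : δ n x y * (1/2 : ℝ) ^ n ≤ ∑' k, δ k x y * (1/2 : ℝ) ^ k :=
        Summable.le_tsum (hsum x y) n (fun j _ => mul_nonneg (hδnn j x y) (by positivity))
      have hρ0 := hρnn x y
      simp only [hddef] at hy
      linarith
    · -- ball property implies open
      intro hball
      rw [isOpen_iff_mem_nhds]
      intro x hx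
      by_contra hnb
      obtain ⟨ε, hεpos, hεball⟩ := hball x hx
      have hxcl : x ∈ closure Uᶜ := by
        rw [mem_closure_iff]
        intro o ho hxo
        by_contra hne
        rw [Set.not_nonempty_iff_eq_empty] at hne
        have hsub : o ⊆ U := by
          intro z hz
          by_contra hzU
          exact Set.eq_empty_iff_forall_notMem.mp hne z ⟨hz, hzU⟩
        exact hnb (Filter.mem_of_superset (ho.mem_nhds hxo) hsub)
      obtain ⟨y, hyU, hylim⟩ := hseq Uᶜ x hxcl
      -- the ρ-part tends to 0
      have h1 : Tendsto (fun k => ρ x (y k)) atTop (𝓝 0) := by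
        rw [Metric.tendsto_atTop]
        intro ε' hε'
        have hxin : x ∈ {z | ρ x z < ε'} := by simp [(hρeq x x).mpr rfl, hε']
        have hev := hylim.eventually ((hρball x ε' hε').eventually_mem hxin)
        obtain ⟨N, hN⟩ := eventually_atTop.mp hev
        refine ⟨N, fun k hk => ?_⟩
        have hmem := hN k hk
        simp only [Set.mem_setOf_eq] at hmem
        rw [Real.dist_eq, sub_zero, abs_of_nonneg (hρnn x (y k))]
        exact hmem
      -- each term of the series tends to 0
      have hterm : ∀ n, Tendsto (fun k => δ n x (y k) * (1/2 : ℝ) ^ n) atTop (𝓝 0) := by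
        intro n
        by_cases hxb : x ∈ b n
        · have hev : ∀ᶠ k in atTop, y k ∈ b n :=
            hylim.eventually ((hbopen n).eventually_mem hxb)
          have heq : (fun k => δ n x (y k) * (1/2 : ℝ) ^ n) =ᶠ[atTop] (fun _ => (0:ℝ)) := by
            filter_upwards [hev] with k hk
            simp only [hδdef, if_pos (iff_of_true hxb hk), zero_mul]
          exact Tendsto.congr' heq.symm tendsto_const_nhds
        · have hh : Tendsto (fun k => h n (y k)) atTop (𝓝 0) := by
            rw [Metric.tendsto_atTop]
            intro ε' hε'
            obtain ⟨M, hM⟩ := exists_pow_lt_of_lt_one hε' (show (1/2 : ℝ) < 1 by norm_num)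
            have hxC : x ∈ (⋃ i : Fin (M+1), F n i.val)ᶜ := by
              intro hxC
              obtain ⟨i, hi⟩ := Set.mem_iUnion.mp hxC
              exact hxb (hFsub n i.val hi)
            have hev := hylim.eventually ((hCopen n M).eventually_mem hxC)
            obtain ⟨N, hN⟩ := eventually_atTop.mp hev
            refine ⟨N, fun k hk => ?_⟩
            have h2 := hhsmall n M (y k) (hN k hk)
            rw [Real.dist_eq, sub_zero, abs_of_nonneg (hnn n (y k))]
            calc h n (y k) ≤ (1/2 : ℝ) ^ (M+1) := h2
              _ < (1/2 : ℝ) ^ M :=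
                pow_lt_pow_right_of_lt_one₀ (by norm_num) (by norm_num) (Nat.lt_succ_self M)
              _ < ε' := hM
          have hδh : ∀ k, δ n x (y k) ≤ h n (y k) := by
            intro k
            simp only [hδdef]
            split
            · exact hnn n (y k)
            · rw [hzero n x hxb, zero_add]
          have hsq := squeeze_zero (fun k => hδnn n x (y k)) hδh hh
          have h3 := hsq.mul_const ((1/2 : ℝ) ^ n)
          rwa [zero_mul] at h3
      -- the series tends to 0 by dominated convergence
      have h2 : Tendsto (fun k => ∑' n, δ n x (y k) * (1/2 : ℝ) ^ n) atTop (𝓝 0) := by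
        have hdc := tendsto_tsum_of_dominated_convergence
          (f := fun k n => δ n x (y k) * (1/2 : ℝ) ^ n)
          (g := fun _ => (0:ℝ)) (bound := fun n => 2 * (1/2 : ℝ) ^ n)
          ((summable_geometric_of_lt_one (by norm_num) (by norm_num)).mul_left 2)
          hterm ?_
        · rw [tsum_zero] at hdc
          exact hdc
        · refine Filter.Eventually.of_forall (fun k n => ?_)
          rw [Real.norm_eq_abs, abs_of_nonneg (mul_nonneg (hδnn n x (y k)) (by positivity))]
          exact mul_le_mul_of_nonneg_right (hδle2 n x (y k)) (by positivity)
      have hd0 : Tendsto (fun k => d x (y k)) atTop (𝓝 0) := by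
        have hadd := h1.add h2
        rw [add_zero] at hadd
        exact hadd
      have hge : ∀ k, ε ≤ d x (y k) := by
        intro k
        by_contra hlt
        push_neg at hlt
        exact hyU k (hεball hlt)
      have hfin : ε ≤ 0 := ge_of_tendsto hd0 (Filter.Eventually.of_forall hge)
      linarith


/-- Every second-countable submetrizable space of cardinality `< 𝔮₀` is symmetrizable. -/
theorem submetrizable_small_symmetrizable {X : Type u} [TopologicalSpace X]
    [SecondCountableTopology X] (hsub : Submetrizable X)
    (hsmall : ∀ (Y : Type u) [TopologicalSpace Y] [SecondCountableTopology Y]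
      [TopologicalSpace.MetrizableSpace Y],
      Cardinal.mk Y ≤ Cardinal.mk X → QSpace Y) :
    Symmetrizable X := by
  classical
  -- fix a countable family acting as a basis of the ambient topology
  obtain ⟨B, hBc, -, hB⟩ := TopologicalSpace.exists_countable_basis X
  obtain ⟨b, hbrange⟩ := (hBc.insert ∅).exists_eq_range (Set.insert_nonempty _ _)
  have hbopen : ∀ n, IsOpen (b n) := by
    intro n
    have hmem : b n ∈ insert ∅ B := hbrange ▸ Set.mem_range_self n
    rcases Set.mem_insert_iff.mp hmem with hc | hc
    · rw [hc]; exact isOpen_empty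
    · exact hB.isOpen hc
  have hbbase : ∀ U : Set X, IsOpen U → ∀ x ∈ U, ∃ n, x ∈ b n ∧ b n ⊆ U := by
    intro U hU x hx
    obtain ⟨v, hvB, hxv, hvU⟩ := hB.exists_subset_of_mem_open hx hU
    have hv : v ∈ Set.range b := hbrange ▸ Set.mem_insert_of_mem _ hvB
    obtain ⟨n, hn⟩ := hv
    exact ⟨n, hn ▸ hxv, hn ▸ hvU⟩
  have hseq : ∀ (s : Set X) (x : X), x ∈ closure s →
      ∃ u : ℕ → X, (∀ k, u k ∈ s) ∧ Filter.Tendsto u Filter.atTop (nhds x) :=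
    fun s x hx => mem_closure_iff_seq_limit.mp hx
  have hSC : SecondCountableTopology X := inferInstance
  let tamb : TopologicalSpace X := inferInstance
  obtain ⟨t', hle, hmet⟩ := hsub
  have hsc' : @SecondCountableTopology X t' := sc_of_coarser X tamb t' hle hSC hmet
  have hQ : @QSpace X t' := @hsmall X t' hsc' hmet le_rfl
  obtain ⟨ρ, hρnn, hρeq, hρsym, hρball, hρcl⟩ := exists_rho_aux X t' hmet
  -- each basic open set is a countable union of ρ-sequentially-closed sets
  have hFsig : ∀ n, ∃ F : ℕ → Set X,
      (∀ m (x : X), (∀ ε : ℝ, 0 < ε → ∃ y ∈ F m, ρ x y < ε) → x ∈ F m) ∧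
      b n = ⋃ m, F m := by
    intro n
    obtain ⟨T, hTo, hTc, hTeq⟩ := hQ (b n)ᶜ
    obtain ⟨g, hg⟩ := (hTc.insert Set.univ).exists_eq_range (Set.insert_nonempty _ _)
    have hgcl : ∀ m, @IsClosed X t' (g m)ᶜ := by
      intro m
      have hmem : g m ∈ insert Set.univ T := hg ▸ Set.mem_range_self m
      rcases Set.mem_insert_iff.mp hmem with hc | hc
      · rw [hc, Set.compl_univ]; exact @isClosed_empty X t'
      · exact @IsOpen.isClosed_compl X t' (g m) (hTo _ hc)
    refine ⟨fun m => (g m)ᶜ, fun m x hx => hρcl (g m)ᶜ (hgcl m) x hx, ?_⟩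
    have h1 : (b n)ᶜ = ⋂ m, g m := by
      rw [hTeq, show ⋂₀ T = ⋂₀ (insert Set.univ T) by simp, hg, Set.sInter_range]
    rw [← compl_compl (b n), h1, Set.compl_iInter]
  choose F hFc hFeq using hFsig
  obtain ⟨d, hd1, hd2⟩ := @core_sym X tamb b hbopen hbbase ρ hρnn hρeq hρsym
    (fun x ε hε => hle _ (hρball x ε hε)) hseq F hFc hFeq
  exact ⟨d, hd1, hd2⟩
end

section
/- Let X be a second-countable functionally Hausdorff topological space such that every second-countable metrizable topological space of cardinality at most the cardinality of X is a Q-space (equivalently, the cardinality of X is strictly less than the cardinal 𝔮₀, the smallest cardinality of a second-countable metrizable space that is not a Q-space). Then X is symmetrizable. -/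
/-- A space is functionally Hausdorff if distinct points are separated by a
continuous real-valued function. -/
def FunctionallyHausdorff (X : Type*) [TopologicalSpace X] : Prop :=
  ∀ x y : X, x ≠ y → ∃ f : X → ℝ, Continuous f ∧ f x ≠ f y

universe u

open TopologicalSpace Topology


namespace FHSym

/-- Enumerated countable basis (padded with `∅`). -/
lemma exists_basis_seq (X : Type u) [TopologicalSpace X] [SecondCountableTopology X] :
    ∃ u : ℕ → Set X, (∀ n, IsOpen (u n)) ∧
      ∀ (x : X) (V : Set X), IsOpen V → x ∈ V → ∃ n, x ∈ u n ∧ u n ⊆ V := by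
  have hc : (insert ∅ (countableBasis X) : Set (Set X)).Countable :=
    (countable_countableBasis X).insert _
  obtain ⟨v, hv⟩ := hc.exists_eq_range ⟨∅, Set.mem_insert _ _⟩
  refine ⟨v, ?_, ?_⟩
  · intro n
    have hm : v n ∈ insert ∅ (countableBasis X) := by rw [hv]; exact Set.mem_range_self n
    rcases Set.mem_insert_iff.1 hm with h | h
    · rw [h]; exact isOpen_empty
    · exact isOpen_of_mem_countableBasis h
  · intro x V hV hx
    obtain ⟨w, hwB, hxw, hwV⟩ := (isBasis_countableBasis X).exists_subset_of_mem_open hx hV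
    have : w ∈ Set.range v := by rw [← hv]; exact Set.mem_insert_of_mem _ hwB
    obtain ⟨n, rfl⟩ := this
    exact ⟨n, hxw, hwV⟩

/-- A Gδ set is a decreasing intersection of a sequence of open sets. -/
lemma gdelta_seq {α : Type*} [TopologicalSpace α] {s : Set α} (h : IsGδ s) :
    ∃ W : ℕ → Set α, (∀ j, IsOpen (W j)) ∧ (∀ i j, i ≤ j → W j ⊆ W i) ∧ s = ⋂ j, W j := by
  obtain ⟨T, hTo, hTc, rfl⟩ := h
  rcases T.eq_empty_or_nonempty with rfl | hne
  · refine ⟨fun _ => Set.univ, fun _ => isOpen_univ, fun _ _ _ => le_rfl, by simp⟩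
  obtain ⟨g, hg⟩ := hTc.exists_eq_range hne
  subst hg
  refine ⟨fun n => ⋂ k ∈ Finset.range (n+1), g k, ?_, ?_, ?_⟩
  · intro n
    exact isOpen_biInter_finset fun k _ => hTo _ (Set.mem_range_self k)
  · intro i j hij x hx
    simp only [Set.mem_iInter, Finset.mem_range] at hx ⊢
    exact fun k hk => hx k (by omega)
  · rw [Set.sInter_range]
    ext x
    simp only [Set.mem_iInter, Finset.mem_range]
    exact ⟨fun h n k _ => h k, fun h k => h k k k.lt_succ_self⟩

/-- From functional Hausdorffness and second countability, a countable separating family of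
continuous real functions. -/
lemma exists_separating (X : Type u) [TopologicalSpace X] [SecondCountableTopology X]
    (hfH : FunctionallyHausdorff X) :
    ∃ f : ℕ → X → ℝ, (∀ n, Continuous (f n)) ∧ ∀ x y : X, x ≠ y → ∃ n, f n x ≠ f n y := by
  classical
  set D : Set X × Set X → X → ℝ := fun q =>
    if h : (∃ g : X → ℝ, Continuous g ∧ (∀ a ∈ q.1, g a ≤ 0) ∧ (∀ b ∈ q.2, 1 ≤ g b))
    then h.choose else fun _ => 0 with hD
  have hDcont : ∀ q, Continuous (D q) := by
    intro q
    simp only [hD]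
    split_ifs with h
    · exact h.choose_spec.1
    · exact continuous_const
  have hDspec : ∀ q, (∃ g : X → ℝ, Continuous g ∧ (∀ a ∈ q.1, g a ≤ 0) ∧ (∀ b ∈ q.2, 1 ≤ g b)) →
      (∀ a ∈ q.1, D q a ≤ 0) ∧ (∀ b ∈ q.2, 1 ≤ D q b) := by
    intro q h
    simp only [hD, dif_pos h]
    exact ⟨h.choose_spec.2.1, h.choose_spec.2.2⟩
  have hSc : (insert (fun _ => (0:ℝ)) (D '' ((countableBasis X) ×ˢ (countableBasis X)))
      : Set (X → ℝ)).Countable :=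
    (((countable_countableBasis X).prod (countable_countableBasis X)).image D).insert _
  obtain ⟨f, hf⟩ := hSc.exists_eq_range ⟨_, Set.mem_insert _ _⟩
  have hfc : ∀ n, Continuous (f n) := by
    intro n
    have hm : f n ∈ insert (fun _ => (0:ℝ)) (D '' ((countableBasis X) ×ˢ (countableBasis X))) := by
      rw [hf]; exact Set.mem_range_self n
    rcases Set.mem_insert_iff.1 hm with h | h
    · rw [h]; exact continuous_const
    · obtain ⟨q, -, hq⟩ := h
      rw [← hq]
      exact hDcont q
  refine ⟨f, hfc, ?_⟩
  have key : ∀ x y : X, ∀ g : X → ℝ, Continuous g → g x < g y → ∃ n, f n x ≠ f n y := by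
    intro x y g hg hlt
    have hpos : (0:ℝ) < g y - g x := by linarith
    set g₁ : X → ℝ := fun z => (g z - g x) / (g y - g x) * 3 - 1 with hg₁def
    have hg₁c : Continuous g₁ :=
      (((hg.sub continuous_const).div_const _).mul continuous_const).sub continuous_const
    have hx₁ : g₁ x < 0 := by
      simp only [hg₁def, sub_self, zero_div, zero_mul]
      norm_num
    have hy₁ : 1 < g₁ y := by
      simp only [hg₁def]
      rw [div_self (ne_of_gt hpos)]
      norm_num
    obtain ⟨B₁, hB₁, hxB₁, hB₁U⟩ := (isBasis_countableBasis X).exists_subset_of_mem_open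
      (show x ∈ g₁ ⁻¹' Set.Iio 0 from hx₁) (isOpen_Iio.preimage hg₁c)
    obtain ⟨B₂, hB₂, hyB₂, hB₂V⟩ := (isBasis_countableBasis X).exists_subset_of_mem_open
      (show y ∈ g₁ ⁻¹' Set.Ioi 1 from hy₁) (isOpen_Ioi.preimage hg₁c)
    have hP : ∃ g' : X → ℝ, Continuous g' ∧ (∀ a ∈ (B₁, B₂).1, g' a ≤ 0) ∧
        (∀ b ∈ (B₁, B₂).2, 1 ≤ g' b) := by
      refine ⟨fun z => max 0 (min 1 (g₁ z)),
        continuous_const.max (continuous_const.min hg₁c), ?_, ?_⟩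
      · intro a ha
        have hga : g₁ a < 0 := hB₁U ha
        exact max_le le_rfl ((min_le_right _ _).trans hga.le)
      · intro b hb
        have hgb : 1 < g₁ b := hB₂V hb
        exact le_max_of_le_right (le_min le_rfl hgb.le)
    have hmem : D (B₁, B₂) ∈ Set.range f := by
      rw [← hf]
      exact Set.mem_insert_of_mem _ (Set.mem_image_of_mem D (Set.mem_prod.2 ⟨hB₁, hB₂⟩))
    obtain ⟨n, hn⟩ := hmem
    refine ⟨n, ?_⟩
    have h1 : D (B₁, B₂) x ≤ 0 := (hDspec _ hP).1 x hxB₁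
    have h2 : 1 ≤ D (B₁, B₂) y := (hDspec _ hP).2 y hyB₂
    rw [hn]
    intro e
    rw [e] at h1
    linarith
  intro x y hxy
  obtain ⟨g, hg, hne⟩ := hfH x y hxy
  rcases hne.lt_or_gt with h | h
  · exact key x y g hg h
  · obtain ⟨n, hn⟩ := key y x g hg h
    exact ⟨n, hn.symm⟩

end FHSym

namespace FHSym

/-- A copy of `X` carrying the separable metrizable topology induced by the family `f`. -/
def MetCopy {X : Type u} (f : ℕ → X → ℝ)
    (hf : ∀ x y : X, x ≠ y → ∃ n, f n x ≠ f n y) : Type u := X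

variable {X : Type u} {f : ℕ → X → ℝ} {hf : ∀ x y : X, x ≠ y → ∃ n, f n x ≠ f n y}

/-- The canonical map into `ℝ^ℕ`. -/
def MetCopy.out : MetCopy f hf → ℕ → ℝ := fun x n => f n x

lemma MetCopy.out_inj : Function.Injective (MetCopy.out (f := f) (hf := hf)) := by
  intro x y h
  by_contra hxy
  obtain ⟨n, hn⟩ := hf x y hxy
  exact hn (congrFun h n)

noncomputable instance : MetricSpace (MetCopy f hf) :=
  MetricSpace.induced MetCopy.out MetCopy.out_inj
    (TopologicalSpace.metrizableSpaceMetric (ℕ → ℝ))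

lemma MetCopy.inducing : Topology.IsInducing (MetCopy.out (f := f) (hf := hf)) := ⟨rfl⟩

instance : SecondCountableTopology (MetCopy f hf) :=
  MetCopy.inducing.secondCountableTopology

lemma MetCopy.continuous_id [TopologicalSpace X] (hfc : ∀ n, Continuous (f n)) :
    Continuous (fun x : X => show MetCopy f hf from x) := by
  rw [(MetCopy.inducing (f := f) (hf := hf)).continuous_iff]
  exact continuous_pi hfc

/-- Sets open in the metric copy are open in the original (finer) topology. -/
lemma MetCopy.isOpen_out [TopologicalSpace X] (hfc : ∀ n, Continuous (f n))
    {A : Set (MetCopy f hf)} (hA : IsOpen A) : IsOpen (show Set X from A) :=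
  hA.preimage (MetCopy.continuous_id hfc)

end FHSym

/-- Every second-countable functionally Hausdorff space of cardinality `< 𝔮₀`
is symmetrizable. -/
theorem functionallyHausdorff_small_symmetrizable {X : Type u} [TopologicalSpace X]
    [SecondCountableTopology X] (hfH : FunctionallyHausdorff X)
    (hsmall : ∀ (Y : Type u) [TopologicalSpace Y] [SecondCountableTopology Y]
      [TopologicalSpace.MetrizableSpace Y],
      Cardinal.mk Y ≤ Cardinal.mk X → QSpace Y) :
    Symmetrizable X := by
  classical
  obtain ⟨f, hfc, hfs⟩ := FHSym.exists_separating X hfH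
  have hQ : QSpace (FHSym.MetCopy f hfs) := hsmall (FHSym.MetCopy f hfs) le_rfl
  obtain ⟨u, huo, hub⟩ := FHSym.exists_basis_seq X
  set e : X → FHSym.MetCopy f hfs := fun z => z with he
  -- Gδ presentations of the basic sets and of their complements in the metric copy
  have hWex : ∀ n : ℕ, ∃ W : ℕ → Set (FHSym.MetCopy f hfs),
      (∀ j, IsOpen (W j)) ∧ (∀ i j, i ≤ j → W j ⊆ W i) ∧
        (u n : Set (FHSym.MetCopy f hfs)) = ⋂ j, W j :=
    fun n => FHSym.gdelta_seq (hQ _)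
  choose W hWo hWa hWe using hWex
  have hVex : ∀ n : ℕ, ∃ V : ℕ → Set (FHSym.MetCopy f hfs),
      (∀ j, IsOpen (V j)) ∧ (∀ i j, i ≤ j → V j ⊆ V i) ∧
        ((u n)ᶜ : Set (FHSym.MetCopy f hfs)) = ⋂ j, V j :=
    fun n => FHSym.gdelta_seq (hQ _)
  choose V hVo hVa hVe using hVex
  have hWmem : ∀ (n : ℕ) (z : X), z ∈ u n ↔ ∀ j, (z : FHSym.MetCopy f hfs) ∈ W n j := by
    intro n z
    have h := Set.ext_iff.1 (hWe n) (z : FHSym.MetCopy f hfs)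
    exact h.trans Set.mem_iInter
  have hVmem : ∀ (n : ℕ) (z : X), z ∉ u n ↔ ∀ j, (z : FHSym.MetCopy f hfs) ∈ V n j := by
    intro n z
    have h := Set.ext_iff.1 (hVe n) (z : FHSym.MetCopy f hfs)
    exact h.trans Set.mem_iInter
  -- the rank of points outside `u n`, and levels of points inside `u n`
  set κ : ℕ → X → ℕ := fun n x => sInf {j | (x : FHSym.MetCopy f hfs) ∉ W n j} with hκ
  set ℓf : ℕ → X → ℕ := fun n y => sInf {j | (y : FHSym.MetCopy f hfs) ∈ (V n j)ᶜ} with hℓ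
  have hκspec : ∀ (n : ℕ) (x : X), x ∉ u n → (x : FHSym.MetCopy f hfs) ∉ W n (κ n x) := by
    intro n x hx
    have h1 : ¬ ∀ j, (x : FHSym.MetCopy f hfs) ∈ W n j := fun hall => hx ((hWmem n x).2 hall)
    push_neg at h1
    simp only [hκ]
    exact Nat.sInf_mem h1
  have hℓspec : ∀ (n : ℕ) (y : X), y ∈ u n → (y : FHSym.MetCopy f hfs) ∈ (V n (ℓf n y))ᶜ := by
    intro n y hy
    have h1 : ¬ ∀ j, (y : FHSym.MetCopy f hfs) ∈ V n j := fun hall => ((hVmem n y).2 hall) hy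
    push_neg at h1
    simp only [hℓ]
    exact Nat.sInf_mem h1
  -- the penalty radius
  set c : ℕ → X → ℝ := fun n y =>
    min ((1/2 : ℝ)^n)
      (if h : ((W n (ℓf n y))ᶜ : Set (FHSym.MetCopy f hfs)).Nonempty
       then Metric.infDist (e y) ((W n (ℓf n y))ᶜ) / 2 else 1) with hc
  have hcpos : ∀ (n : ℕ) (y : X), y ∈ u n → 0 < c n y := by
    intro n y hy
    simp only [hc]
    refine lt_min (by positivity) ?_
    by_cases h : ((W n (ℓf n y))ᶜ : Set (FHSym.MetCopy f hfs)).Nonempty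
    · rw [dif_pos h]
      have hyW : (y : FHSym.MetCopy f hfs) ∈ W n (ℓf n y) := (hWmem n y).1 hy (ℓf n y)
      have hcl : IsClosed ((W n (ℓf n y))ᶜ : Set (FHSym.MetCopy f hfs)) :=
        (hWo n _).isClosed_compl
      have hnm : (y : FHSym.MetCopy f hfs) ∉ (W n (ℓf n y))ᶜ := fun hmem => hmem hyW
      have := (hcl.notMem_iff_infDist_pos h).1 hnm
      linarith
    · rw [dif_neg h]; norm_num
  -- key: a penalized point has level strictly below the rank of the outside point
  have hkey : ∀ (n : ℕ) (x y : X), x ∉ u n → y ∈ u n →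
      dist (e x) (e y) < c n y → ℓf n y < κ n x := by
    intro n x y hx hy hlt
    by_contra hge
    push_neg at hge
    have hxW : (x : FHSym.MetCopy f hfs) ∉ W n (ℓf n y) :=
      fun hmem => hκspec n x hx (hWa n (κ n x) (ℓf n y) hge hmem)
    have hne : ((W n (ℓf n y))ᶜ : Set (FHSym.MetCopy f hfs)).Nonempty := ⟨x, hxW⟩
    have hle : Metric.infDist (e y) ((W n (ℓf n y))ᶜ) ≤
        dist (e y) (e x) :=
      Metric.infDist_le_dist_of_mem hxW
    have hc2 : c n y ≤ Metric.infDist (e y) ((W n (ℓf n y))ᶜ) / 2 := by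
      simp only [hc]
      rw [dif_pos hne]
      exact min_le_right _ _
    have hdnn : (0:ℝ) ≤ dist (e x) (e y) := dist_nonneg
    rw [dist_comm] at hle
    linarith
  -- the penalty and the symmetric
  set cond : ℕ → X → X → Prop := fun n x y =>
    (x ∈ u n ∧ y ∉ u n ∧ dist (e x) (e y) < c n x) ∨
    (y ∈ u n ∧ x ∉ u n ∧ dist (e x) (e y) < c n y)
    with hcond
  set p : X → X → ℝ := fun x y =>
    if h : {n | cond n x y}.Nonempty then (1/2 : ℝ)^(sInf {n | cond n x y}) else 0 with hp
  set d : X → X → ℝ := fun x y =>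
    dist (e x) (e y) + p x y with hd
  have hpnn : ∀ x y : X, 0 ≤ p x y := by
    intro x y
    simp only [hp]
    split_ifs
    · positivity
    · exact le_refl 0
  have hpsymm : ∀ x y : X, p x y = p y x := by
    intro x y
    have hs : {n | cond n x y} = {n | cond n y x} := by
      ext n
      simp only [Set.mem_setOf_eq, hcond]
      rw [dist_comm]
      tauto
    simp only [hp, hs]
  have hpl : ∀ (n : ℕ) (x y : X), cond n x y → (1/2 : ℝ)^n ≤ p x y := by
    intro n x y h
    simp only [hp]
    rw [dif_pos ⟨n, h⟩]
    exact pow_le_pow_of_le_one (by norm_num) (by norm_num) (Nat.sInf_le h)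
  have hpub : ∀ (N : ℕ) (x y : X), (∀ n ≤ N, ¬ cond n x y) → p x y ≤ (1/2 : ℝ)^(N+1) := by
    intro N x y h
    simp only [hp]
    split_ifs with hne
    · have hm := Nat.sInf_mem hne
      have hgt : N + 1 ≤ sInf {n | cond n x y} := by
        by_contra hlt
        push_neg at hlt
        exact h _ (Nat.lt_succ_iff.1 hlt) hm
      exact pow_le_pow_of_le_one (by norm_num) (by norm_num) hgt
    · positivity
  refine ⟨d, ⟨?_, ?_, ?_⟩, ?_⟩
  · intro x y
    simp only [hd]
    exact add_nonneg dist_nonneg (hpnn x y)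
  · intro x y
    constructor
    · intro h0
      simp only [hd] at h0
      have hpn := hpnn x y
      have hdn : (0:ℝ) ≤ dist (e x) (e y) := dist_nonneg
      have h1 : dist (e x) (e y) = 0 := by linarith
      have h2 : e x = e y := dist_eq_zero.1 h1
      exact h2
    · rintro rfl
      have hpxx : p x x = 0 := by
        simp only [hp]
        rw [dif_neg]
        rintro ⟨n, hn⟩
        simp only [Set.mem_setOf_eq, hcond] at hn
        tauto
      simp only [hd]
      rw [hpxx, dist_self, add_zero]
  · intro x y
    simp only [hd]
    rw [hpsymm x y, dist_comm]
  · intro Uo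
    constructor
    · -- open sets are unions of balls
      intro hU x hx
      obtain ⟨n, hxn, hnU⟩ := hub x Uo hU hx
      refine ⟨min ((1/2 : ℝ)^n) (c n x), lt_min (by positivity) (hcpos n x hxn), ?_⟩
      intro y hy
      simp only [Set.mem_setOf_eq] at hy
      apply hnU
      by_contra hyn
      rcases lt_or_ge (dist (e x) (e y)) (c n x)
        with hlt | hge
      · have hcnd : cond n x y := by
          simp only [hcond]
          exact Or.inl ⟨hxn, hyn, hlt⟩
        have hple := hpl n x y hcnd
        have h2 : d x y < (1/2 : ℝ)^n := lt_of_lt_of_le hy (min_le_left _ _)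
        simp only [hd] at h2
        have hdn : (0:ℝ) ≤ dist (e x) (e y) :=
          dist_nonneg
        linarith
      · have h2 : d x y < c n x := lt_of_lt_of_le hy (min_le_right _ _)
        simp only [hd] at h2
        have := hpnn x y
        linarith
    · -- ball-open sets are open
      intro hball
      rw [isOpen_iff_mem_nhds]
      intro x hxU
      by_contra hnb
      obtain ⟨ε, hε, hsub⟩ := hball x hxU
      obtain ⟨N, hN⟩ := exists_pow_lt_of_lt_one (half_pos hε) (by norm_num : (1/2 : ℝ) < 1)
      set Ofun : ℕ → Set X := fun n =>
        if x ∈ u n then u n else e ⁻¹' V n (κ n x - 1) with hOfun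
      set Bset : Set (FHSym.MetCopy f hfs) := Metric.ball (e x) (ε/2) with hB
      set O : Set X := (Bset : Set X) ∩
        ⋂ n ∈ Finset.range (N+1), Ofun n with hO
      have hOopen : IsOpen O := by
        rw [hO]
        refine IsOpen.inter ?_ (isOpen_biInter_finset ?_)
        · exact FHSym.MetCopy.isOpen_out hfc (show IsOpen Bset from hB ▸ Metric.isOpen_ball)
        · intro n _
          simp only [hOfun]
          split_ifs with hxn
          · exact huo n
          · exact FHSym.MetCopy.isOpen_out hfc (hVo n _)
      have hxO : x ∈ O := by
        rw [hO]
        refine ⟨show e x ∈ Bset from hB ▸ Metric.mem_ball_self (half_pos hε), ?_⟩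
        refine Set.mem_iInter₂.2 fun n _ => ?_
        simp only [hOfun]
        split_ifs with hxn
        · exact hxn
        · by_contra hxV
          refine hxn ?_
          by_contra hxu
          exact hxV ((hVmem n x).1 hxu (κ n x - 1))
      have hnsub : ¬ O ⊆ Uo := fun hOsub => hnb (mem_nhds_iff.2 ⟨O, hOsub, hOopen, hxO⟩)
      obtain ⟨y, hyO, hyU⟩ := Set.not_subset.1 hnsub
      rw [hO] at hyO
      have hyball : dist (e x) (e y) < ε/2 := by
        have hy1 : e y ∈ Bset := hyO.1
        rw [hB] at hy1
        have h := Metric.mem_ball.1 hy1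
        rwa [dist_comm] at h
      have hcomp : ∀ n ≤ N, y ∈ Ofun n := fun n hn =>
        Set.mem_iInter₂.1 hyO.2 n (Finset.mem_range.2 (Nat.lt_succ_of_le hn))
      have hnocond : ∀ n ≤ N, ¬ cond n x y := by
        intro n hn hcnd
        have hyn := hcomp n hn
        simp only [hcond] at hcnd
        rcases hcnd with ⟨hxu, hyu, _⟩ | ⟨hyu, hxu, hdist⟩
        · simp only [hOfun, if_pos hxu] at hyn
          exact hyu hyn
        · simp only [hOfun, if_neg hxu] at hyn
          have hlt := hkey n x y hxu hyu hdist
          have hyF : (y : FHSym.MetCopy f hfs) ∈ (V n (ℓf n y))ᶜ := hℓspec n y hyu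
          have hmono : ((V n (ℓf n y))ᶜ : Set (FHSym.MetCopy f hfs)) ⊆ (V n (κ n x - 1))ᶜ :=
            Set.compl_subset_compl.2 (hVa n (ℓf n y) (κ n x - 1) (by omega))
          exact (hmono hyF) hyn
      have hdxy : d x y < ε := by
        simp only [hd]
        have h1 := hpub N x y hnocond
        have h2 : (1/2 : ℝ)^(N+1) ≤ (1/2 : ℝ)^N :=
          pow_le_pow_of_le_one (by norm_num) (by norm_num) (Nat.le_succ N)
        linarith
      exact hyU (hsub hdxy)
end

section
/- Let X be a second-countable T1 topological space such that every second-countable T1 topological space of cardinality at most the cardinality of X is a Q-space (equivalently, the cardinality of X is strictly less than the cardinal 𝔮₁, the smallest cardinality of a second-countable T1-space that is not a Q-space). Then X is symmetrizable. -/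
universe u

/-- Every second-countable T1 space of cardinality `< 𝔮₁` is symmetrizable. -/
theorem t1_small_symmetrizable {X : Type u} [TopologicalSpace X]
    [SecondCountableTopology X] [T1Space X]
    (hsmall : ∀ (Y : Type u) [TopologicalSpace Y] [SecondCountableTopology Y]
      [T1Space Y], Cardinal.mk Y ≤ Cardinal.mk X → QSpace Y) :
    Symmetrizable X := by
  classical
  have hQ : QSpace X := hsmall X le_rfl
  obtain ⟨b, hbc, -, hb⟩ := TopologicalSpace.exists_countable_basis X
  -- enumerate a countable basis (together with ∅ to ensure nonemptiness)
  obtain ⟨B, hBrange⟩ : ∃ B : ℕ → Set X, insert (∅ : Set X) b = Set.range B :=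
    (hbc.insert ∅).exists_eq_range (Set.insert_nonempty _ _)
  have hBopen : ∀ n, IsOpen (B n) := by
    intro n
    have h : B n ∈ insert (∅ : Set X) b := hBrange ▸ Set.mem_range_self n
    rcases h with h | h
    · rw [h]; exact isOpen_empty
    · exact hb.isOpen h
  have hbasis : ∀ U : Set X, IsOpen U → ∀ x ∈ U, ∃ n, x ∈ B n ∧ B n ⊆ U := by
    intro U hU x hx
    obtain ⟨v, hvb, hxv, hvU⟩ := hb.exists_subset_of_mem_open hx hU
    have hv : v ∈ Set.range B := hBrange ▸ Set.mem_insert_of_mem _ hvb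
    obtain ⟨n, rfl⟩ := hv
    exact ⟨n, hxv, hvU⟩
  -- each basic open set is an increasing countable union of closed sets
  have hGδ : ∀ n : ℕ, ∃ G : ℕ → Set X, (∀ k, IsOpen (G k)) ∧ (B n)ᶜ = ⋂ k, G k :=
    fun n => (hQ (B n)ᶜ).eq_iInter_nat
  choose G hGopen hGeq using hGδ
  set F : ℕ → ℕ → Set X := fun n k => (⋂ j ∈ Set.Iic k, G n j)ᶜ with hF
  have hFclosed : ∀ n k, IsClosed (F n k) :=
    fun n k => ((Set.finite_Iic k).isOpen_biInter fun j _ => hGopen n j).isClosed_compl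
  have hFmono : ∀ n k k', k ≤ k' → F n k ⊆ F n k' := by
    intro n k k' hkk' x hx
    simp only [hF, Set.mem_compl_iff, Set.mem_iInter, Set.mem_Iic] at hx ⊢
    intro h
    exact hx fun j hj => h j (hj.trans hkk')
  have hFB : ∀ n k, F n k ⊆ B n := by
    intro n k x hx
    simp only [hF, Set.mem_compl_iff, Set.mem_iInter, Set.mem_Iic] at hx
    push_neg at hx
    obtain ⟨j, -, hj⟩ := hx
    by_contra hxB
    have : x ∈ (B n)ᶜ := hxB
    rw [hGeq n] at this
    exact hj (Set.mem_iInter.mp this j)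
  have hBF : ∀ n, ∀ x ∈ B n, ∃ k, x ∈ F n k := by
    intro n x hx
    have : x ∉ (B n)ᶜ := fun h => h hx
    rw [hGeq n] at this
    rw [Set.mem_iInter] at this
    push_neg at this
    obtain ⟨j, hj⟩ := this
    refine ⟨j, ?_⟩
    simp only [hF, Set.mem_compl_iff, Set.mem_iInter, Set.mem_Iic]
    push_neg
    exact ⟨j, le_rfl, hj⟩
  -- the symmetric "k-closeness" relation
  set R : ℕ → X → X → Prop := fun k x y =>
    (∀ n ≤ k, x ∈ F n k → y ∈ B n) ∧ (∀ n ≤ k, y ∈ F n k → x ∈ B n) with hR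
  have hRsymm : ∀ k x y, R k x y ↔ R k y x := fun k x y =>
    ⟨fun ⟨h1, h2⟩ => ⟨h2, h1⟩, fun ⟨h1, h2⟩ => ⟨h2, h1⟩⟩
  have hRrefl : ∀ k x, R k x x := fun k x =>
    ⟨fun n _ h => hFB n k h, fun n _ h => hFB n k h⟩
  have hbad : ∀ x y : X, x ≠ y → ∃ k, ¬ R k x y := by
    intro x y hxy
    obtain ⟨n, hxn, hn⟩ := hbasis {y}ᶜ isOpen_compl_singleton x (by simp [hxy])
    obtain ⟨k₀, hk₀⟩ := hBF n x hxn
    refine ⟨max n k₀, fun hRk => ?_⟩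
    have hy : y ∈ B n := hRk.1 n (le_max_left _ _) (hFmono n k₀ _ (le_max_right _ _) hk₀)
    exact hn hy rfl
  -- the symmetric distance
  set d : X → X → ℝ := fun x y =>
    if x = y then 0 else (((sInf {k | ¬ R k x y} : ℕ) : ℝ) + 1)⁻¹ with hd
  have hdnonneg : ∀ x y, 0 ≤ d x y := by
    intro x y
    simp only [hd]
    split_ifs
    · exact le_refl 0
    · positivity
  have hdzero : ∀ x y, d x y = 0 ↔ x = y := by
    intro x y
    simp only [hd]
    split_ifs with h
    · simp [h]
    · simp only [iff_false, h]
      intro habs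
      have : (0:ℝ) < (((sInf {k | ¬ R k x y} : ℕ) : ℝ) + 1)⁻¹ := by positivity
      rw [habs] at this
      exact lt_irrefl 0 this
  have hdsymm : ∀ x y, d x y = d y x := by
    intro x y
    simp only [hd]
    have hset : {k | ¬ R k x y} = {k | ¬ R k y x} := by
      ext k; simp [hRsymm k x y]
    by_cases h : x = y
    · rw [if_pos h, if_pos h.symm]
    · rw [if_neg h, if_neg (fun h' => h h'.symm), hset]
  -- small distance implies closeness
  have hball1 : ∀ (k : ℕ) (x y : X), d x y < ((k : ℝ) + 1)⁻¹ → R k x y := by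
    intro k x y hlt
    by_cases hxy : x = y
    · rw [hxy]; exact hRrefl k y
    · rw [hd] at hlt
      simp only [if_neg hxy] at hlt
      set m := sInf {k | ¬ R k x y} with hm
      have hkm : (k : ℝ) + 1 < (m : ℝ) + 1 := by
        have h1 : (0:ℝ) < (m : ℝ) + 1 := by positivity
        have h2 : (0:ℝ) < (k : ℝ) + 1 := by positivity
        exact (inv_lt_inv₀ h1 h2).mp hlt
      have hkm' : k < m := by exact_mod_cast (by linarith : (k:ℝ) < (m:ℝ))
      have := Nat.notMem_of_lt_sInf (s := {k | ¬ R k x y}) hkm'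
      simpa using this
  -- closeness up to level k implies small distance
  have hball2 : ∀ (k : ℕ) (x y : X), x ≠ y → (∀ j ≤ k, R j x y) →
      d x y < ((k : ℝ) + 1)⁻¹ := by
    intro k x y hxy hRj
    rw [hd]
    simp only [if_neg hxy]
    set m := sInf {k | ¬ R k x y} with hm
    have hmem : m ∈ {k | ¬ R k x y} := Nat.sInf_mem (hbad x y hxy)
    have hkm : k < m := by
      by_contra hle
      push_neg at hle
      exact hmem (hRj m hle)
    have h1 : ((k : ℝ) + 1) < ((m : ℝ) + 1) := by exact_mod_cast Nat.succ_lt_succ hkm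
    have h2 : (0:ℝ) < (k : ℝ) + 1 := by positivity
    exact inv_strictAnti₀ h2 h1
  -- the sets {y | ∀ j ≤ k, R j x y} are open
  have hOopen : ∀ (k : ℕ) (x : X), IsOpen {y | ∀ j ≤ k, R j x y} := by
    intro k x
    have heq : {y | ∀ j ≤ k, R j x y} =
        ⋂ j ∈ Set.Iic k, ⋂ n ∈ Set.Iic j,
          ((if x ∈ F n j then B n else Set.univ) ∩
            (if x ∈ B n then Set.univ else (F n j)ᶜ)) := by
      ext y
      simp only [Set.mem_setOf_eq, Set.mem_iInter, Set.mem_inter_iff, Set.mem_Iic, hR]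
      constructor
      · intro hy j hj n hnj
        obtain ⟨h1, h2⟩ := hy j hj
        constructor
        · split_ifs with hxF
          · exact h1 n hnj hxF
          · trivial
        · split_ifs with hxB
          · trivial
          · intro hyF
            exact absurd (h2 n hnj hyF) hxB
      · intro hy j hj
        constructor
        · intro n hnj hxF
          have := (hy j hj n hnj).1
          rwa [if_pos hxF] at this
        · intro n hnj hyF
          by_contra hxB
          have := (hy j hj n hnj).2
          rw [if_neg hxB] at this
          exact this hyF
    rw [heq]
    refine (Set.finite_Iic k).isOpen_biInter fun j _ =>
      (Set.finite_Iic j).isOpen_biInter fun n _ => IsOpen.inter ?_ ?_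
    · split_ifs
      · exact hBopen n
      · exact isOpen_univ
    · split_ifs
      · exact isOpen_univ
      · exact (hFclosed n j).isOpen_compl
  refine ⟨d, ⟨hdnonneg, hdzero, hdsymm⟩, ?_⟩
  intro U
  constructor
  · intro hU x hx
    obtain ⟨n, hxn, hnU⟩ := hbasis U hU x hx
    obtain ⟨k₀, hk₀⟩ := hBF n x hxn
    refine ⟨((max n k₀ : ℕ) + 1 : ℝ)⁻¹, by positivity, ?_⟩
    intro y hy
    simp only [Set.mem_setOf_eq] at hy
    have hRk : R (max n k₀) x y := hball1 _ x y hy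
    exact hnU (hRk.1 n (le_max_left _ _) (hFmono n k₀ _ (le_max_right _ _) hk₀))
  · intro h
    rw [isOpen_iff_forall_mem_open]
    intro x hx
    obtain ⟨ε, hε, hball⟩ := h x hx
    obtain ⟨k, hk⟩ := exists_nat_one_div_lt hε
    refine ⟨{y | ∀ j ≤ k, R j x y}, ?_, hOopen k x, fun j _ => hRrefl j x⟩
    intro y hy
    simp only [Set.mem_setOf_eq] at hy
    by_cases hxy : x = y
    · rwa [← hxy]
    · apply hball
      have hlt : d x y < ((k : ℝ) + 1)⁻¹ := hball2 k x y hxy hy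
      have : ((k : ℝ) + 1)⁻¹ < ε := by rwa [one_div] at hk
      exact Set.mem_setOf_eq ▸ lt_trans hlt this
end

section
/- Let X be a second-countable Hausdorff topological space such that every second-countable Hausdorff topological space of cardinality at most the cardinality of X is a Q-space (equivalently, the cardinality of X is strictly less than the cardinal 𝔮₂, the smallest cardinality of a second-countable Hausdorff space that is not a Q-space). Then X is symmetrizable. -/
universe u

/-- Every second-countable Hausdorff space of cardinality `< 𝔮₂` is symmetrizable. -/
theorem t2_small_symmetrizable {X : Type u} [TopologicalSpace X]
    [SecondCountableTopology X] [T2Space X]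
    (hsmall : ∀ (Y : Type u) [TopologicalSpace Y] [SecondCountableTopology Y]
      [T2Space Y], Cardinal.mk Y ≤ Cardinal.mk X → QSpace Y) :
    Symmetrizable X := by
  classical
  have hQ : QSpace X := hsmall X le_rfl
  -- enumerate a countable basis (with ∅ inserted so it is nonempty)
  obtain ⟨S, hSc, hSne, hSb⟩ := TopologicalSpace.exists_countable_basis X
  obtain ⟨B, hB⟩ := (hSc.insert ∅).exists_eq_range (Set.insert_nonempty _ _)
  have hBopen : ∀ i, IsOpen (B i) := by
    intro i
    have : B i ∈ insert ∅ S := hB ▸ Set.mem_range_self i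
    rcases this with h | h
    · simp [h]
    · exact hSb.isOpen h
  have hBbase : ∀ (x : X) (U : Set X), IsOpen U → x ∈ U → ∃ i, x ∈ B i ∧ B i ⊆ U := by
    intro x U hU hx
    obtain ⟨s, hsS, hxs, hsU⟩ := hSb.exists_subset_of_mem_open hx hU
    have : s ∈ insert ∅ S := Set.mem_insert_of_mem _ hsS
    rw [hB] at this
    obtain ⟨i, hi⟩ := this
    exact ⟨i, hi ▸ hxs, hi ▸ hsU⟩
  -- each basic set is an increasing union of closed subsets
  have hFσ : ∀ i : ℕ, ∃ C : ℕ → Set X, (∀ n, IsClosed (C n)) ∧ (∀ n, C n ⊆ C (n + 1)) ∧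
      (⋃ n, C n) = B i := by
    intro i
    obtain ⟨U, hUo, hUe⟩ := (hQ (B i)ᶜ).eq_iInter_nat
    refine ⟨fun n => ⋃ m ∈ Finset.range (n + 1), (U m)ᶜ, ?_, ?_, ?_⟩
    · intro n
      exact isClosed_biUnion_finset fun m _ => (hUo m).isClosed_compl
    · intro n
      intro y hy
      simp only [Set.mem_iUnion, Finset.mem_range] at hy ⊢
      obtain ⟨m, hm, hym⟩ := hy
      exact ⟨m, by omega, hym⟩
    · ext y
      simp only [Set.mem_iUnion, Finset.mem_range]
      constructor
      · rintro ⟨n, m, hm, hy⟩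
        by_contra hyB
        have : y ∈ (B i)ᶜ := hyB
        rw [hUe] at this
        exact hy (Set.mem_iInter.1 this m)
      · intro hy
        by_contra h
        push_neg at h
        have : y ∈ ⋂ n, U n := Set.mem_iInter.2 fun n => by
          by_contra hn; exact (h n n (Nat.lt_succ_self n)) hn
        rw [← hUe] at this
        exact this hy
  choose C hCcl hCmono hCU using hFσ
  have hCsub : ∀ i n, C i n ⊆ B i := by
    intro i n
    rw [← hCU i]
    exact Set.subset_iUnion (C i) n
  have hCmono' : ∀ i m n, m ≤ n → C i m ⊆ C i n := by
    intro i m n h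
    induction h with
    | refl => exact le_rfl
    | step h ih => exact ih.trans (hCmono i _)
  -- the symmetric neighborhoods
  set W : ℕ → X → Set X := fun n x =>
    {y | (∀ i ≤ n, x ∈ C i n → y ∈ B i) ∧ (∀ i ≤ n, y ∈ C i n → x ∈ B i)} with hW
  have hWx : ∀ n x, x ∈ W n x := fun n x =>
    ⟨fun i _ h => hCsub i n h, fun i _ h => hCsub i n h⟩
  have hWsymm : ∀ n x y, y ∈ W n x ↔ x ∈ W n y := fun n x y => And.comm
  have hWmono : ∀ (m n : ℕ) (x : X), m ≤ n → W n x ⊆ W m x := by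
    intro m n x hmn y hy
    exact ⟨fun i hi h => hy.1 i (hi.trans hmn) (hCmono' i m n hmn h),
           fun i hi h => hy.2 i (hi.trans hmn) (hCmono' i m n hmn h)⟩
  have hWopen : ∀ n x, IsOpen (W n x) := by
    intro n x
    have : W n x = (⋂ i ∈ {i : ℕ | i ≤ n ∧ x ∈ C i n}, B i) ∩
        (⋃ i ∈ {i : ℕ | i ≤ n ∧ x ∉ B i}, C i n)ᶜ := by
      ext y
      simp only [hW, Set.mem_setOf_eq, Set.mem_inter_iff, Set.mem_iInter,
        Set.mem_compl_iff, Set.mem_iUnion, not_exists]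
      constructor
      · rintro ⟨h1, h2⟩
        refine ⟨fun i hi => h1 i hi.1 hi.2, fun i hi hyC => hi.2 (h2 i hi.1 hyC)⟩
      · rintro ⟨h1, h2⟩
        refine ⟨fun i hi h => h1 i ⟨hi, h⟩, fun i hi hyC => ?_⟩
        by_contra hxB
        exact h2 i ⟨hi, hxB⟩ hyC
    rw [this]
    refine IsOpen.inter ?_ ?_
    · refine Set.Finite.isOpen_biInter ?_ fun i _ => hBopen i
      exact (Set.finite_Iic n).subset fun i hi => hi.1
    · have hcl : IsClosed (⋃ i ∈ {i : ℕ | i ≤ n ∧ x ∉ B i}, C i n) :=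
        Set.Finite.isClosed_biUnion ((Set.finite_Iic n).subset fun i hi => hi.1)
          fun i _ => hCcl i n
      exact hcl.isOpen_compl
  have hWbase : ∀ (x : X) (U : Set X), IsOpen U → x ∈ U → ∃ n, W n x ⊆ U := by
    intro x U hU hx
    obtain ⟨i, hxB, hBU⟩ := hBbase x U hU hx
    have : x ∈ ⋃ n, C i n := (hCU i).symm ▸ hxB
    obtain ⟨n₀, hn₀⟩ := Set.mem_iUnion.1 this
    refine ⟨max i n₀, fun y hy => ?_⟩
    exact hBU (hy.1 i (le_max_left _ _) (hCmono' i n₀ _ (le_max_right _ _) hn₀))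
  have hWsep : ∀ x y : X, x ≠ y → ∃ n, y ∉ W n x := by
    intro x y hxy
    obtain ⟨n, hn⟩ := hWbase x {y}ᶜ isOpen_compl_singleton
      (by simp [hxy])
    exact ⟨n, fun h => (hn h) rfl⟩
  -- the symmetric
  set d : X → X → ℝ := fun x y =>
    if h : x = y then 0 else ((Nat.find (hWsep x y h) : ℝ) + 1)⁻¹ with hd
  have hball : ∀ (x : X) (n : ℕ) (y : X), d x y < ((n : ℝ) + 1)⁻¹ ↔ y ∈ W n x := by
    intro x n y
    by_cases h : x = y
    · subst h
      simp only [hd, dif_pos rfl]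
      simp only [hWx, iff_true]
      positivity
    · simp only [hd, dif_neg h]
      have hpos : (0 : ℝ) < (n : ℝ) + 1 := by positivity
      have hpos' : (0 : ℝ) < (Nat.find (hWsep x y h) : ℝ) + 1 := by positivity
      rw [inv_lt_inv₀ hpos' hpos]
      constructor
      · intro hlt
        have hnf : (n : ℝ) < (Nat.find (hWsep x y h) : ℝ) := by linarith
        have hnf' : n < Nat.find (hWsep x y h) := by exact_mod_cast hnf
        have := Nat.find_min (hWsep x y h) hnf'
        simpa using this
      · intro hy
        have : n < Nat.find (hWsep x y h) := by
          by_contra hle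
          push_neg at hle
          exact Nat.find_spec (hWsep x y h) (hWmono _ _ _ hle hy)
        have : (n : ℝ) < (Nat.find (hWsep x y h) : ℝ) := by exact_mod_cast this
        linarith
  refine ⟨d, ⟨?_, ?_, ?_⟩, ?_⟩
  · intro x y
    by_cases h : x = y
    · simp [hd, h]
    · simp only [hd, dif_neg h]
      positivity
  · intro x y
    by_cases h : x = y
    · simp [hd, h]
    · simp only [hd, dif_neg h]
      constructor
      · intro habs
        exfalso
        have : ((Nat.find (hWsep x y h) : ℝ) + 1)⁻¹ ≠ 0 := by positivity
        exact this habs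
      · intro h'; exact absurd h' h
  · intro x y
    by_cases h : x = y
    · rw [h]
    · have h' : y ≠ x := fun e => h e.symm
      simp only [hd, dif_neg h, dif_neg h']
      have key : ∀ n, y ∉ W n x ↔ x ∉ W n y := fun n => not_congr (hWsymm n x y)
      have heq : Nat.find (hWsep x y h) = Nat.find (hWsep y x h') :=
        le_antisymm
          (Nat.find_le ((key _).2 (Nat.find_spec (hWsep y x h'))))
          (Nat.find_le ((key _).1 (Nat.find_spec (hWsep x y h))))
      rw [heq]
  · intro U
    constructor
    · intro hU x hx
      obtain ⟨n, hn⟩ := hWbase x U hU hx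
      exact ⟨((n : ℝ) + 1)⁻¹, by positivity, fun y hy => hn ((hball x n y).1 hy)⟩
    · intro hU
      rw [isOpen_iff_forall_mem_open]
      intro x hx
      obtain ⟨ε, hε, hsub⟩ := hU x hx
      obtain ⟨n, hn⟩ := exists_nat_one_div_lt hε
      refine ⟨W n x, fun y hy => hsub ?_, hWopen n x, hWx n x⟩
      have : d x y < ((n : ℝ) + 1)⁻¹ := (hball x n y).2 hy
      calc d x y < ((n : ℝ) + 1)⁻¹ := this
        _ = 1 / ((n : ℝ) + 1) := (one_div _).symm
        _ < ε := hn
end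

section
/- There exists a second-countable submetrizable topological space X which is not symmetrizable and whose cardinality equals 𝔮₀, the smallest cardinality of a second-countable metrizable space that is not a Q-space. -/
universe u

open Cardinal in
/-- `𝔮₀`: the smallest cardinality of a second-countable metrizable space
which is not a Q-space. -/
noncomputable def q0 : Cardinal.{u} :=
  sInf { c : Cardinal.{u} | ∃ (Y : Type u) (tY : TopologicalSpace Y),
    @SecondCountableTopology Y tY ∧ @TopologicalSpace.MetrizableSpace Y tY ∧
    ¬ @QSpace Y tY ∧ Cardinal.mk Y = c }

open Set Filter Topology TopologicalSpace

-- auxiliary: Gδ preimage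
lemma isGδ_preimage {X Y : Type*} [TopologicalSpace X] [TopologicalSpace Y] {f : X → Y}
    (hf : Continuous f) {s : Set Y} (hs : IsGδ s) : IsGδ (f ⁻¹' s) := by
  obtain ⟨T, hT, hTc, rfl⟩ := hs
  refine ⟨(f ⁻¹' ·) '' T, ?_, hTc.image _, ?_⟩
  · rintro t ⟨u, hu, rfl⟩
    exact (hT u hu).preimage hf
  · rw [sInter_image, preimage_sInter]

lemma rat_not_isGδ : ¬ IsGδ (Set.range ((↑) : ℚ → ℝ)) := by
  intro h
  have hd : Dense (Set.range ((↑) : ℚ → ℝ)) := Rat.isDenseEmbedding_coe_real.dense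
  have h1 := residual_of_dense_Gδ h hd
  have h2 : {x : ℝ | Irrational x} ∈ residual ℝ := eventually_residual_irrational
  have h3 := Filter.inter_mem h1 h2
  have he : Set.range ((↑) : ℚ → ℝ) ∩ {x : ℝ | Irrational x} = ∅ := by
    ext x; simp [Irrational]
  rw [he] at h3
  simpa using (dense_of_mem_residual h3).nonempty

lemma real_not_QSpace : ¬ QSpace ℝ := fun h => rat_not_isGδ (h _)

lemma ulift_not_QSpace : ¬ QSpace (ULift.{u} ℝ) := by
  intro h
  apply real_not_QSpace
  intro A
  have h1 : IsGδ ((ULift.down : ULift.{u} ℝ → ℝ) ⁻¹' A) := h _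
  have h2 : IsGδ ((ULift.up : ℝ → ULift.{u} ℝ) ⁻¹' ((ULift.down) ⁻¹' A)) :=
    isGδ_preimage continuous_uliftUp h1
  exact h2

-- the refined topology making Bᶜ open
def refTop {Y : Type*} (tY : TopologicalSpace Y) (B : Set Y) : TopologicalSpace Y :=
  TopologicalSpace.generateFrom (insert Bᶜ {U : Set Y | tY.IsOpen U})

-- neighborhoods outside Bᶜ in the refined topology come from the original topology
lemma nbhd_outside {Y : Type*} [tY : TopologicalSpace Y] (B : Set Y) {W : Set Y}
    (hW : @IsOpen Y (refTop tY B) W)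
    {y : Y} (hy : y ∈ W) (hyA : y ∉ Bᶜ) : ∃ V, IsOpen V ∧ y ∈ V ∧ V ⊆ W := by
  have hW' : TopologicalSpace.GenerateOpen (insert Bᶜ {U : Set Y | tY.IsOpen U}) W := hW
  clear hW
  induction hW' with
  | basic s hs =>
    rcases hs with rfl | hs
    · exact absurd hy hyA
    · exact ⟨s, hs, hy, subset_rfl⟩
  | univ => exact ⟨Set.univ, isOpen_univ, trivial, subset_rfl⟩
  | inter s t _ _ ihs iht =>
    obtain ⟨V1, h1, m1, s1⟩ := ihs hy.1
    obtain ⟨V2, h2, m2, s2⟩ := iht hy.2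
    exact ⟨V1 ∩ V2, h1.inter h2, ⟨m1, m2⟩, fun z hz => ⟨s1 hz.1, s2 hz.2⟩⟩
  | sUnion S _ ih =>
    obtain ⟨s, hsS, hys⟩ := hy
    obtain ⟨V, h, m, sub⟩ := ih s hsS hys
    exact ⟨V, h, m, sub.trans (Set.subset_sUnion_of_mem hsS)⟩

lemma refTop_isOpen_of_isOpen {Y : Type*} [tY : TopologicalSpace Y] (B : Set Y)
    {U : Set Y} (hU : IsOpen U) : @IsOpen Y (refTop tY B) U :=
  TopologicalSpace.isOpen_generateFrom_of_mem
    (Set.mem_insert_of_mem _ (show U ∈ {U : Set Y | tY.IsOpen U} from hU))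

lemma refTop_isOpen_compl {Y : Type*} [tY : TopologicalSpace Y] (B : Set Y) :
    @IsOpen Y (refTop tY B) Bᶜ :=
  TopologicalSpace.isOpen_generateFrom_of_mem (Set.mem_insert _ _)

lemma refined_not_symmetrizable {Y : Type*} [tY : TopologicalSpace Y]
    [TopologicalSpace.MetrizableSpace Y] {B : Set Y}
    (hB : ¬ IsGδ B) : ¬ @Symmetrizable Y (refTop tY B) := by
  classical
  rintro ⟨d, ⟨hpos, hzero, hsymm⟩, hgen⟩
  apply hB
  set As : ℕ → Set Y := fun n => {x | x ∈ Bᶜ ∧ ∀ y, d x y < 1 / (n + 1) → y ∈ Bᶜ} with hAs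
  -- closure of each As n is inside Bᶜ
  have hclos : ∀ n, closure (As n) ⊆ Bᶜ := by
    intro n y hy
    by_contra hyA
    obtain ⟨x, hxmem, hxlim⟩ := mem_closure_iff_seq_limit.mp hy
    have hfar : ∀ k, (1 : ℝ) / (n + 1) ≤ d y (x k) := by
      intro k
      by_contra hlt
      push_neg at hlt
      rw [hsymm] at hlt
      exact hyA ((hxmem k).2 y hlt)
    have hyC : y ∉ Set.range x := by
      rintro ⟨k, rfl⟩
      exact hyA (hxmem k).1
    have hCco : @IsOpen Y (refTop tY B) (Set.range x)ᶜ := by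
      rw [hgen]
      intro z hz
      by_contra hcon
      push_neg at hcon
      have hzy : z = y := by
        have hzc : z ∈ closure (Set.range x) := by
          rw [mem_closure_iff]
          intro V hV hzV
          obtain ⟨ε, hε, hball⟩ := (hgen V).1 (refTop_isOpen_of_isOpen B hV) z hzV
          obtain ⟨w, hwC⟩ := (Set.not_subset).1 (hcon ε hε)
          exact ⟨w, hball hwC.1, not_not.1 hwC.2⟩
        have hcl : closure (Set.range x) ⊆ insert y (Set.range x) :=
          closure_minimal (Set.subset_insert _ _) hxlim.isCompact_insert_range.isClosed
        rcases hcl hzc with rfl | hzC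
        · rfl
        · exact absurd hzC hz
      obtain ⟨w, hw1, hw2⟩ := (Set.not_subset).1 (hcon (1 / (n + 1)) (by positivity))
      obtain ⟨k, rfl⟩ := not_not.1 hw2
      rw [hzy] at hw1
      exact absurd hw1 (not_lt.2 (hfar k))
    obtain ⟨V, hVopen, hyV, hVsub⟩ := nbhd_outside B hCco hyC hyA
    obtain ⟨k, hk⟩ := (hxlim.eventually (hVopen.mem_nhds hyV)).exists
    exact hVsub hk ⟨k, rfl⟩
  have hcover : Bᶜ = ⋃ n, closure (As n) := by
    apply Set.Subset.antisymm
    · intro x hx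
      obtain ⟨ε, hε, hball⟩ := (hgen Bᶜ).1 (refTop_isOpen_compl B) x hx
      obtain ⟨n, hn⟩ := exists_nat_one_div_lt hε
      exact Set.mem_iUnion.2 ⟨n, subset_closure ⟨hx, fun y hy => hball (hy.trans hn)⟩⟩
    · exact Set.iUnion_subset hclos
  have hBeq : B = ⋂ n, (closure (As n))ᶜ := by
    rw [← Set.compl_iUnion, ← hcover, compl_compl]
  rw [hBeq]
  exact IsGδ.iInter fun n => isClosed_closure.isOpen_compl.isGδ

lemma main_lemma {Y : Type*} [tY : TopologicalSpace Y] [SecondCountableTopology Y]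
    [TopologicalSpace.MetrizableSpace Y] {B : Set Y} (hB : ¬ IsGδ B) :
    ∃ tX : TopologicalSpace Y, @SecondCountableTopology Y tX ∧ @Submetrizable Y tX ∧
      ¬ @Symmetrizable Y tX := by
  classical
  refine ⟨refTop tY B, ?_, ?_, refined_not_symmetrizable hB⟩
  · -- second countable
    obtain ⟨b, hbc, hbg⟩ := @SecondCountableTopology.is_open_generated_countable Y tY _
    refine @SecondCountableTopology.mk Y (refTop tY B)
      ⟨insert Bᶜ b, hbc.insert Bᶜ, le_antisymm ?_ ?_⟩
    · rw [le_generateFrom_iff_subset_isOpen]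
      rintro s (rfl | hs)
      · exact refTop_isOpen_compl B
      · refine refTop_isOpen_of_isOpen B ?_
        rw [hbg]
        exact TopologicalSpace.isOpen_generateFrom_of_mem hs
    · unfold refTop
      rw [le_generateFrom_iff_subset_isOpen]
      rintro s (rfl | hs)
      · exact TopologicalSpace.isOpen_generateFrom_of_mem (Set.mem_insert _ _)
      · have hle : TopologicalSpace.generateFrom (insert Bᶜ b) ≤
            TopologicalSpace.generateFrom b :=
          TopologicalSpace.generateFrom_anti (Set.subset_insert _ _)
        have hs' : @IsOpen Y (TopologicalSpace.generateFrom b) s := by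
          rw [← hbg]; exact hs
        exact (isOpen_implies_isOpen_iff.mpr hle) s hs'
  · -- submetrizable
    exact ⟨tY, fun U hU => refTop_isOpen_of_isOpen B hU, inferInstance⟩


/-- There is a second-countable submetrizable non-symmetrizable space of cardinality `𝔮₀`. -/
theorem exists_nonsymmetrizable_submetrizable :
    ∃ (X : Type u) (tX : TopologicalSpace X),
      @SecondCountableTopology X tX ∧ @Submetrizable X tX ∧
      ¬ @Symmetrizable X tX ∧ Cardinal.mk X = q0.{u} := by
  have hne : { c : Cardinal.{u} | ∃ (Y : Type u) (tY : TopologicalSpace Y),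
      @SecondCountableTopology Y tY ∧ @TopologicalSpace.MetrizableSpace Y tY ∧
      ¬ @QSpace Y tY ∧ Cardinal.mk Y = c }.Nonempty := by
    refine ⟨Cardinal.mk (ULift.{u} ℝ), ULift.{u} ℝ, inferInstance, ?_, ?_, ?_, rfl⟩
    · exact Homeomorph.ulift.isEmbedding.secondCountableTopology
    · infer_instance
    · exact ulift_not_QSpace
  have hmem := csInf_mem hne
  obtain ⟨Y, tY, h2, hmet, hQ, hcard⟩ := hmem
  have hBex : ∃ B : Set Y, ¬ @IsGδ Y tY B := by
    by_contra h
    push_neg at h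
    exact hQ fun A => h A
  obtain ⟨B, hB⟩ := hBex
  obtain ⟨tX, h2', hsub, hsym⟩ := @main_lemma Y tY h2 hmet B hB
  exact ⟨Y, tX, h2', hsub, hsym, hcard⟩
end

section
/- Let X be a topological space with topology τ and let A ⊆ X be a set which is not a Gδ-set in (X, τ). Let τ' be the topology on X generated by τ ∪ {X \ A}. Then A is closed in (X, τ') but A is not a Gδ-set in (X, τ'); in particular, (X, τ') is not perfect. -/
lemma key_open_reduction {X : Type*} (t : TopologicalSpace X) (A : Set X) (W : Set X)
    (hW : TopologicalSpace.GenerateOpen ({U | t.IsOpen U} ∪ {Aᶜ}) W) :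
    ∃ U : Set X, t.IsOpen U ∧ W ∩ A ⊆ U ∧ U ⊆ W := by
  letI := t
  induction hW with
  | basic V hV =>
      rcases hV with h | h
      · exact ⟨V, h, Set.inter_subset_left, subset_rfl⟩
      · simp only [Set.mem_singleton_iff] at h
        subst h
        exact ⟨∅, isOpen_empty, by simp [Set.inter_comm], by simp⟩
  | univ => exact ⟨Set.univ, isOpen_univ, by simp, by simp⟩
  | inter V₁ V₂ _ _ ih₁ ih₂ =>
      obtain ⟨U₁, h₁, a₁, b₁⟩ := ih₁
      obtain ⟨U₂, h₂, a₂, b₂⟩ := ih₂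
      exact ⟨U₁ ∩ U₂, IsOpen.inter h₁ h₂,
        fun x hx => ⟨a₁ ⟨hx.1.1, hx.2⟩, a₂ ⟨hx.1.2, hx.2⟩⟩,
        Set.inter_subset_inter b₁ b₂⟩
  | sUnion S _ ih =>
      choose U hU ha hb using ih
      refine ⟨⋃ (V : Set X) (h : V ∈ S), U V h, isOpen_iUnion fun V => isOpen_iUnion fun h => hU V h, ?_, ?_⟩
      · rintro x ⟨⟨V, hVS, hxV⟩, hxA⟩
        exact Set.mem_iUnion.2 ⟨V, Set.mem_iUnion.2 ⟨hVS, ha V hVS ⟨hxV, hxA⟩⟩⟩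
      · intro x hx
        obtain ⟨V, hV⟩ := Set.mem_iUnion.1 hx
        obtain ⟨hVS, hxU⟩ := Set.mem_iUnion.1 hV
        exact ⟨V, hVS, hb V hVS hxU⟩

/-- Refining a topology by declaring a non-Gδ set `A` closed produces a
non-perfect space: `A` is closed but not Gδ in the new topology. -/
theorem not_perfect_of_declaring_closed {X : Type*} (t : TopologicalSpace X)
    (A : Set X) (hA : ¬ @IsGδ X t A) :
    letI t' : TopologicalSpace X := TopologicalSpace.generateFrom ({U | t.IsOpen U} ∪ {Aᶜ})
    @IsClosed X t' A ∧ ¬ @IsGδ X t' A ∧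
      ¬ (∀ F : Set X, @IsClosed X t' F → @IsGδ X t' F) := by
  set t' : TopologicalSpace X := TopologicalSpace.generateFrom ({U | t.IsOpen U} ∪ {Aᶜ}) with ht'
  have hclosed : @IsClosed X t' A :=
    ⟨TopologicalSpace.GenerateOpen.basic _ (Or.inr rfl)⟩
  have hnotGδ : ¬ @IsGδ X t' A := by
    intro hGδ
    obtain ⟨T, hTopen, hTct, hTeq⟩ := hGδ
    apply hA
    choose U hU ha hb using fun W (h : W ∈ T) =>
      key_open_reduction t A W (hTopen W h)
    refine ⟨{V | ∃ W, ∃ h : W ∈ T, V = U W h}, ?_, ?_, ?_⟩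
    · rintro V ⟨W, h, rfl⟩
      exact hU W h
    · haveI := hTct.to_subtype
      have hsub : {V | ∃ W, ∃ h : W ∈ T, V = U W h} ⊆
          (fun p : {W // W ∈ T} => U p.1 p.2) '' Set.univ := by
        rintro V ⟨W, h, rfl⟩
        exact ⟨⟨W, h⟩, trivial, rfl⟩
      exact Set.Countable.mono hsub (Set.countable_univ.image _)
    · apply subset_antisymm
      · rintro x hx V ⟨W, h, rfl⟩
        have hxW : x ∈ W := by rw [hTeq] at hx; exact hx W h
        exact ha W h ⟨hxW, hx⟩
      · intro x hx
        rw [hTeq]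
        intro W hW
        exact hb W hW (hx _ ⟨W, hW, rfl⟩)
  exact ⟨hclosed, hnotGδ, fun h => hnotGδ (h A hclosed)⟩
end

section
/- Let X = {-1/n : n ∈ ℕ, n ≥ 1} ∪ {0} ∪ {1/n : n ∈ ℕ, n ≥ 1} ⊆ ℝ and define d : X × X → ℝ by: d(x,y) = max{x,y} if max{x,y} > 0 and min{x,y} < 0; d(x,y) = |x − y| if max{x,y} ≤ 0; d(x,y) = 0 if x = y; and d(x,y) = 1 otherwise. Then d is a symmetric on X, and the topology on X generated by d is not Hausdorff. -/
/-- The topology generated by a premetric `d`: a set is open iff every point of it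
contains some `d`-ball around the point. -/
def premetricTopology {X : Type*} (d : X → X → ℝ) : TopologicalSpace X where
  IsOpen U := ∀ x ∈ U, ∃ ε > 0, ∀ y, d x y < ε → y ∈ U
  isOpen_univ := fun _ _ => ⟨1, one_pos, fun _ _ => trivial⟩
  isOpen_inter := fun U V hU hV x hx => by
    obtain ⟨ε₁, hε₁, h₁⟩ := hU x hx.1
    obtain ⟨ε₂, hε₂, h₂⟩ := hV x hx.2
    exact ⟨min ε₁ ε₂, lt_min hε₁ hε₂, fun y hy =>
      ⟨h₁ y (hy.trans_le (min_le_left _ _)), h₂ y (hy.trans_le (min_le_right _ _))⟩⟩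
  isOpen_sUnion := fun S hS x hx => by
    obtain ⟨U, hU, hxU⟩ := hx
    obtain ⟨ε, hε, h⟩ := hS U hU x hxU
    exact ⟨ε, hε, fun y hy => ⟨U, hU, h y hy⟩⟩

/-- The set `{-1/n : n ≥ 1} ∪ {0} ∪ {1/n : n ≥ 1}` in `ℝ`. -/
def S : Set ℝ :=
  {x | (∃ n : ℕ, 1 ≤ n ∧ x = -(1 / (n : ℝ))) ∨ x = 0 ∨ (∃ n : ℕ, 1 ≤ n ∧ x = 1 / (n : ℝ))}

/-- The symmetric from the example: `d(x,y) = max{x,y}` if `max{x,y} > 0` and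
`min{x,y} < 0`; `|x - y|` if `max{x,y} ≤ 0`; `0` if `x = y`; `1` otherwise. -/
noncomputable def dEx (x y : S) : ℝ :=
  if 0 < max (x : ℝ) (y : ℝ) ∧ min (x : ℝ) (y : ℝ) < 0 then max (x : ℝ) (y : ℝ)
  else if max (x : ℝ) (y : ℝ) ≤ 0 then |(x : ℝ) - (y : ℝ)|
  else if x = y then 0
  else 1

lemma isOpen_premetric {X : Type*} (d : X → X → ℝ) (U : Set X) :
    @IsOpen X (premetricTopology d) U ↔ ∀ x ∈ U, ∃ ε > 0, ∀ y, d x y < ε → y ∈ U := Iff.rfl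

lemma dEx_neg_pos (x y : S) (hx : (x : ℝ) < 0) (hy : 0 < (y : ℝ)) : dEx x y = (y : ℝ) := by
  have hm : max (x : ℝ) (y : ℝ) = (y : ℝ) := max_eq_right (hx.trans hy).le
  have hmin : min (x : ℝ) (y : ℝ) = (x : ℝ) := min_eq_left (hx.trans hy).le
  unfold dEx
  rw [if_pos ⟨by rw [hm]; exact hy, by rw [hmin]; exact hx⟩, hm]

lemma dEx_zero_neg (x y : S) (hx : (x : ℝ) = 0) (hy : (y : ℝ) < 0) : dEx x y = -(y : ℝ) := by
  have hm : max (x : ℝ) (y : ℝ) = (x : ℝ) := max_eq_left (hy.le.trans hx.ge)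
  unfold dEx
  rw [if_neg (by rw [hm, hx]; simp), if_pos (by rw [hm, hx])]
  rw [hx]
  rw [abs_of_nonneg (by linarith)]
  ring

lemma one_div_succ_mem_S (n : ℕ) : (1 / ((n : ℝ) + 1)) ∈ S := by
  right; right
  exact ⟨n + 1, by omega, by push_cast; ring⟩

lemma neg_one_div_succ_mem_S (n : ℕ) : (-(1 / ((n : ℝ) + 1))) ∈ S := by
  left
  exact ⟨n + 1, by omega, by push_cast; ring⟩

/-- `dEx` is a symmetric on `S` and the topology it generates is not Hausdorff. -/
theorem dEx_symmetric_not_hausdorff :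
    SymmetricDist dEx ∧ ¬ @T2Space S (premetricTopology dEx) := by
  constructor
  · refine ⟨fun x y => ?_, fun x y => ?_, fun x y => ?_⟩
    · unfold dEx
      split_ifs with h1 h2 h3
      · exact h1.1.le
      · exact abs_nonneg _
      · exact le_refl 0
      · exact zero_le_one
    · constructor
      · intro h
        unfold dEx at h
        split_ifs at h with h1 h2 h3
        · exact absurd h h1.1.ne'
        · exact Subtype.ext (sub_eq_zero.mp (abs_eq_zero.mp h))
        · exact h3
        · exact absurd h one_ne_zero
      · rintro rfl
        unfold dEx
        rw [if_neg (by simp; intro h; linarith), if_pos rfl]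
        split_ifs with h2
        · simp
        · rfl
    · unfold dEx
      rw [max_comm (x : ℝ), min_comm (x : ℝ), abs_sub_comm]
      simp only [eq_comm]
  · intro h
    set a : S := ⟨-(1 / ((0 : ℕ) + 1) : ℝ), neg_one_div_succ_mem_S 0⟩ with ha
    set b : S := ⟨(0 : ℝ), Or.inr (Or.inl rfl)⟩ with hb
    have hab : a ≠ b := by
      intro h'
      have := congrArg (Subtype.val) h'
      norm_num [ha, hb] at this
    obtain ⟨U, V, hU, hV, haU, hbV, hUV⟩ := h.t2 hab
    rw [isOpen_premetric] at hU hV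
    obtain ⟨ε, hε, hballU⟩ := hU a haU
    obtain ⟨δ, hδ, hballV⟩ := hV b hbV
    obtain ⟨n, hn⟩ := exists_nat_one_div_lt hδ
    set q : S := ⟨-(1 / ((n : ℝ) + 1)), neg_one_div_succ_mem_S n⟩ with hq
    have hqneg : (q : ℝ) < 0 := by
      rw [hq]; simp; positivity
    have hqV : q ∈ V := by
      apply hballV
      rw [dEx_zero_neg b q rfl hqneg, hq]
      simpa using hn
    obtain ⟨δ', hδ', hballV'⟩ := hV q hqV
    obtain ⟨m, hm⟩ := exists_nat_one_div_lt (lt_min hε hδ')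
    set p : S := ⟨(1 / ((m : ℝ) + 1)), one_div_succ_mem_S m⟩ with hp
    have hppos : 0 < (p : ℝ) := by rw [hp]; positivity
    have haneg : (a : ℝ) < 0 := by rw [ha]; norm_num
    have hpU : p ∈ U := by
      apply hballU
      rw [dEx_neg_pos a p haneg hppos, hp]
      exact lt_of_lt_of_le hm (min_le_left _ _)
    have hpV : p ∈ V := by
      apply hballV'
      rw [dEx_neg_pos q p hqneg hppos, hp]
      exact lt_of_lt_of_le hm (min_le_right _ _)
    exact Set.disjoint_left.mp hUV hpU hpV
end
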